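/- arXiv:1302.4599 — 5 statements merged into one kernel-verified Lean document; each statement's English description precedes it below -/
import Mathlib

section
/- Let 𝔉 = {(X_i, d_i, p_i) : i ∈ I} be a nonempty weakly self-similar family of pointed metric spaces such that the unit sphere S_i = {x ∈ X_i : d_i(x,p_i) = 1} is nonempty for every i ∈ I. Then 𝔉 is uniformly bounded if and only if 𝔉 is uniformly discrete with respect to the marked points; moreover, if 𝔉 is uniformly bounded then R_*(𝔉) = 1 / R*(𝔉). -/
open Filter Topology Set
open scoped ENNReal

/-- A scaling sequence: strictly positive reals tending to zero. -/
def IsScaling (r : ℕ → ℝ) : Prop := (∀ n, 0 < r n) ∧ Tendsto r atTop (𝓝 0)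

/-- A sequence of reals is almost decreasing if it is eventually nonincreasing. -/
def AlmostDecreasing (t : ℕ → ℝ) : Prop := ∀ᶠ n in atTop, t (n + 1) ≤ t n

/-- `τ ∈ Ẽ₀ᵈ`: almost decreasing, values in `E \ {0}`, tending to `0`. -/
def MemE0d (E : Set ℝ) (t : ℕ → ℝ) : Prop :=
  AlmostDecreasing t ∧ (∀ n, t n ∈ E \ {0}) ∧ Tendsto t atTop (𝓝 0)

/-- `(a,b)` is a connected component of `Int(ℝ⁺ \ E)`: an open interval in `ℝ⁺`
missing `E` that is maximal (among such intervals) with this property. -/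
def IsGapComponent (E : Set ℝ) (a b : ℝ) : Prop :=
  0 ≤ a ∧ a < b ∧ Ioo a b ∩ E = ∅ ∧
    ∀ a' b' : ℝ, 0 ≤ a' → a' ≤ a → b ≤ b' → Ioo a' b' ∩ E = ∅ → a' = a ∧ b' = b

/-- `((aₙ,bₙ))ₙ ∈ Ĩ_Eᵈ`. -/
def MemIE (E : Set ℝ) (a b : ℕ → ℝ) : Prop :=
  (∀ n, IsGapComponent E (a n) (b n)) ∧ AlmostDecreasing a ∧
    Tendsto a atTop (𝓝 0) ∧ Tendsto (fun n => (b n - a n) / b n) atTop (𝓝 1)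

/-- `x̃ ≍ ỹ`: there are `c₁, c₂ > 0` with `c₁ xₙ < yₙ < c₂ xₙ` for all `n`. -/
def Asymp (x y : ℕ → ℝ) : Prop :=
  ∃ c₁ c₂ : ℝ, 0 < c₁ ∧ 0 < c₂ ∧ ∀ n, c₁ * x n < y n ∧ y n < c₂ * x n

/-- `E` is `τ̃`-strongly porous at `0`. -/
def TauStronglyPorous (E : Set ℝ) (t : ℕ → ℝ) : Prop :=
  ∃ a b : ℕ → ℝ, MemIE E a b ∧ Asymp t a

/-- `E` is completely strongly porous at `0`. -/
def CSP (E : Set ℝ) : Prop := ∀ t : ℕ → ℝ, MemE0d E t → TauStronglyPorous E t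

/-- `L̃ = ((lₙ,mₙ)) ∈ Ĩ_Eᵈ` is universal. -/
def IsUniversal (E : Set ℝ) (l m : ℕ → ℝ) : Prop :=
  MemIE E l m ∧ ∀ a b : ℕ → ℝ, MemIE E a b →
    ∃ (N₁ : ℕ) (f : ℕ → ℕ), ∀ n, N₁ ≤ n → a n = l (f n)

/-- `M(L̃) = limsupₙ lₙ/mₙ₊₁`, as an element of `[0,∞]`. -/
noncomputable def Mlim (l m : ℕ → ℝ) : ℝ≥0∞ :=
  limsup (fun n => ENNReal.ofReal (l n / m (n + 1))) atTop

/-- `C(τ̃) = inf{ limsupₙ aₙ/τₙ : ((aₙ,bₙ)) ∈ Ĩ_Eᵈ(τ̃) }` (inf ∅ = ∞). -/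
noncomputable def Ctau (E : Set ℝ) (t : ℕ → ℝ) : ℝ≥0∞ :=
  sInf {c : ℝ≥0∞ | ∃ a b : ℕ → ℝ, MemIE E a b ∧ (∀ᶠ n in atTop, t n ≤ a n) ∧
    c = limsup (fun n => ENNReal.ofReal (a n / t n)) atTop}

/-- `C_E = sup_{τ̃ ∈ Ẽ₀ᵈ} C(τ̃)`. -/
noncomputable def Ctot (E : Set ℝ) : ℝ≥0∞ :=
  ⨆ t ∈ {t : ℕ → ℝ | MemE0d E t}, Ctau E t

/-- A normal scaling sequence for the pointed metric space `(E, |·|, 0)`. -/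
def IsNormalE (E : Set ℝ) (r : ℕ → ℝ) : Prop :=
  IsScaling r ∧ ∃ s : ℕ → ℝ, (∀ n, s n ∈ E) ∧ AlmostDecreasing s ∧
    Tendsto (fun n => s n / r n) atTop (𝓝 1)

/-- `R*(Ω₀ᴱ(n))`: the sup of all limits `limₙ sₙ/rₙ` over normal scaling sequences `r`
for `(E,|·|,0)` and sequences `s` in `E` for which the finite limit exists (sup ∅ = 0). -/
noncomputable def RstarE (E : Set ℝ) : ℝ≥0∞ :=
  sSup {c : ℝ≥0∞ | ∃ (r s : ℕ → ℝ) (L : ℝ), IsNormalE E r ∧ (∀ n, s n ∈ E) ∧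
    Tendsto (fun n => s n / r n) atTop (𝓝 L) ∧ c = ENNReal.ofReal L}

/-- `x̃` and `ỹ` are mutually stable w.r.t. `r̃`. -/
def MutuallyStable {X : Type*} [MetricSpace X] (r : ℕ → ℝ) (x y : ℕ → X) : Prop :=
  ∃ L : ℝ, Tendsto (fun n => dist (x n) (y n) / r n) atTop (𝓝 L)

/-- A family of sequences is self-stable w.r.t. `r̃`. -/
def SelfStable {X : Type*} [MetricSpace X] (r : ℕ → ℝ) (F : Set (ℕ → X)) : Prop :=
  ∀ x ∈ F, ∀ y ∈ F, MutuallyStable r x y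

/-- A maximal self-stable family w.r.t. `r̃`. -/
def MaximalSelfStable {X : Type*} [MetricSpace X] (r : ℕ → ℝ) (F : Set (ℕ → X)) : Prop :=
  SelfStable r F ∧ ∀ z : ℕ → X, z ∈ F ∨ ∃ x ∈ F, ¬ MutuallyStable r x z

/-- A normal scaling sequence for the pointed metric space `(X,d,p)`. -/
def IsNormalX {X : Type*} [MetricSpace X] (p : X) (r : ℕ → ℝ) : Prop :=
  IsScaling r ∧ ∃ x : ℕ → X, AlmostDecreasing (fun n => dist (x n) p) ∧
    Tendsto (fun n => dist (x n) p / r n) atTop (𝓝 1)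

/-- `R*(Ω_pˣ(n))`: the sup of all limits `limₙ d(xₙ,p)/rₙ` over normal scaling
sequences `r̃` and sequences `x̃` in `X` for which the finite limit exists (sup ∅ = 0). -/
noncomputable def RstarX {X : Type*} [MetricSpace X] (p : X) : ℝ≥0∞ :=
  sSup {c : ℝ≥0∞ | ∃ (r : ℕ → ℝ) (x : ℕ → X) (L : ℝ), IsNormalX p r ∧
    Tendsto (fun n => dist (x n) p / r n) atTop (𝓝 L) ∧ c = ENNReal.ofReal L}

/-- `R₊(Ω_pˣ(n))`: the inf of the strictly positive such limits (inf ∅ = ∞). -/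
noncomputable def RlowX {X : Type*} [MetricSpace X] (p : X) : ℝ≥0∞ :=
  sInf {c : ℝ≥0∞ | ∃ (r : ℕ → ℝ) (x : ℕ → X) (L : ℝ), IsNormalX p r ∧
    Tendsto (fun n => dist (x n) p / r n) atTop (𝓝 L) ∧ 0 < L ∧ c = ENNReal.ofReal L}

/-- `ρ*(Y) = sup_{y ∈ Y} d(y,q)` in `[0,∞]`. -/
noncomputable def rhoSup {Y : Type*} [MetricSpace Y] (q : Y) : ℝ≥0∞ :=
  ⨆ y : Y, ENNReal.ofReal (dist y q)

/-- `ρ₊(Y) = inf{ d(y,q) : y ≠ q }` in `[0,∞]` (inf ∅ = ∞, i.e. `Y = {q}` gives `∞`). -/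
noncomputable def rhoInf {Y : Type*} [MetricSpace Y] (q : Y) : ℝ≥0∞ :=
  sInf {c : ℝ≥0∞ | ∃ y : Y, y ≠ q ∧ c = ENNReal.ofReal (dist y q)}

/-- Theorem 4.4.3. -/
theorem stmt13 {I : Type*} [Nonempty I] (X : I → Type*) [∀ i, MetricSpace (X i)]
    (p : ∀ i, X i)
    (hss : ∀ (i : I) (t : ℝ), t ≠ 0 → (∃ x : X i, dist x (p i) = t) →
      ∃ (j : I) (f : X i → X j), Function.Bijective f ∧ f (p i) = p j ∧
        ∀ x y : X i, dist (f x) (f y) = dist x y / t)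
    (hsph : ∀ i, ∃ x : X i, dist x (p i) = 1) :
    ((⨆ i, rhoSup (p i)) < ⊤ ↔ 0 < ⨅ i, rhoInf (p i)) ∧
      ((⨆ i, rhoSup (p i)) < ⊤ →
        (⨅ i, rhoInf (p i)) = 1 / ⨆ i, rhoSup (p i)) := by
  have key : ∀ (i : I) (y : X i), y ≠ p i → ∃ (j : I) (z : X j),
      dist z (p j) = 1 / dist y (p i) := by
    intro i y hy
    have hs : dist y (p i) ≠ 0 := by simpa [dist_eq_zero] using hy
    obtain ⟨j, f, hbij, hfp, hdist⟩ := hss i (dist y (p i)) hs ⟨y, rfl⟩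
    obtain ⟨x, hx⟩ := hsph i
    refine ⟨j, f x, ?_⟩
    rw [← hfp, hdist, hx]
  set A := ⨆ i, rhoSup (p i) with hA
  set B := ⨅ i, rhoInf (p i) with hB
  have hBA : B = A⁻¹ := by
    apply le_antisymm
    · rw [ENNReal.le_inv_iff_mul_le]
      have : B * A = ⨆ i, ⨆ x : X i, B * ENNReal.ofReal (dist x (p i)) := by
        rw [hA]
        simp only [rhoSup, ENNReal.mul_iSup]
      rw [this]
      refine iSup_le fun i => iSup_le fun x => ?_
      rcases eq_or_ne x (p i) with h | h
      · simp [h]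
      · obtain ⟨j, z, hz⟩ := key i x h
        have hd : (0:ℝ) < dist x (p i) := dist_pos.mpr h
        have hzne : z ≠ p j := by
          rw [← dist_pos, hz]
          positivity
        have hBle : B ≤ ENNReal.ofReal (dist z (p j)) := by
          refine le_trans (iInf_le _ j) (sInf_le ?_)
          exact ⟨z, hzne, rfl⟩
        calc B * ENNReal.ofReal (dist x (p i))
            ≤ ENNReal.ofReal (dist z (p j)) * ENNReal.ofReal (dist x (p i)) :=
              mul_le_mul_left hBle _
          _ = ENNReal.ofReal (dist z (p j) * dist x (p i)) :=
              (ENNReal.ofReal_mul dist_nonneg).symm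
          _ ≤ 1 := by
              rw [hz]
              rw [one_div, inv_mul_cancel₀ (ne_of_gt hd)]
              simp
    · refine le_iInf fun i => le_sInf ?_
      rintro c ⟨y, hy, rfl⟩
      obtain ⟨j, z, hz⟩ := key i y hy
      have hd : (0:ℝ) < dist y (p i) := dist_pos.mpr hy
      have h1 : (ENNReal.ofReal (dist y (p i)))⁻¹ ≤ A := by
        have : ENNReal.ofReal (dist z (p j)) ≤ A := by
          refine le_trans ?_ (le_iSup _ j)
          exact le_iSup (fun z' : X j => ENNReal.ofReal (dist z' (p j))) z
        rwa [hz, one_div, ENNReal.ofReal_inv_of_pos hd] at this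
      calc A⁻¹ ≤ ((ENNReal.ofReal (dist y (p i)))⁻¹)⁻¹ :=
            ENNReal.inv_le_inv.mpr h1
        _ = ENNReal.ofReal (dist y (p i)) := inv_inv _
  constructor
  · rw [hBA]
    constructor
    · intro h
      exact ENNReal.inv_pos.mpr h.ne
    · intro h
      exact lt_top_iff_ne_top.mpr (by simpa [ENNReal.inv_pos] using h)
  · intro _
    rw [hBA, one_div]
end

section
/- Let (X,d,p) be a pointed metric space, let r̃ = (r_n) be a normal scaling sequence and let F be a maximal self-stable family w.r.t. r̃ with p̃ = (p,p,...) ∈ F. Then there exist a strictly increasing sequence (n_k) of natural numbers, with μ̃ := (r_{n_k})_{k∈ℕ}, and a maximal self-stable family G w.r.t. μ̃ with p̃ ∈ G, such that: (a) G contains a sequence c̃ with d̃_μ̃(c̃,p̃) = 1; (b) inf{ d̃_μ̃(ỹ,p̃) : ỹ ∈ G, d̃_μ̃(ỹ,p̃) > 0 } ≤ inf{ d̃_r̃(x̃,p̃) : x̃ ∈ F, d̃_r̃(x̃,p̃) > 0 }; and (c) sup{ d̃_r̃(x̃,p̃) : x̃ ∈ F } ≤ sup{ d̃_μ̃(ỹ,p̃)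 : ỹ ∈ G }. -/
open Filter Topology Set
open scoped ENNReal

/-- The set of values `d̃_r̃(x̃,p̃)` over `x̃ ∈ F`, as elements of `[0,∞]`. -/
def limSetX {X : Type*} [MetricSpace X] (p : X) (r : ℕ → ℝ) (F : Set (ℕ → X)) :
    Set ℝ≥0∞ :=
  {c | ∃ x ∈ F, ∃ L : ℝ,
    Tendsto (fun n => dist (x n) p / r n) atTop (𝓝 L) ∧ c = ENNReal.ofReal L}

/-- The set of strictly positive values `d̃_r̃(x̃,p̃)` over `x̃ ∈ F`. -/
def posLimSetX {X : Type*} [MetricSpace X] (p : X) (r : ℕ → ℝ) (F : Set (ℕ → X)) :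
    Set ℝ≥0∞ :=
  {c | ∃ x ∈ F, ∃ L : ℝ,
    Tendsto (fun n => dist (x n) p / r n) atTop (𝓝 L) ∧ 0 < L ∧ c = ENNReal.ofReal L}

lemma mutuallyStable_self {X : Type*} [MetricSpace X] (μ : ℕ → ℝ) (z : ℕ → X) :
    MutuallyStable μ z z := by
  refine ⟨0, ?_⟩
  have h : (fun n => dist (z n) (z n) / μ n) = fun _ => (0 : ℝ) := by
    funext n; simp
  rw [h]; exact tendsto_const_nhds

lemma MutuallyStable.symm' {X : Type*} [MetricSpace X] {μ : ℕ → ℝ} {x y : ℕ → X}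
    (h : MutuallyStable μ x y) : MutuallyStable μ y x := by
  obtain ⟨L, hL⟩ := h
  exact ⟨L, by simpa [dist_comm] using hL⟩

lemma exists_maximalSelfStable {X : Type*} [MetricSpace X] (μ : ℕ → ℝ)
    (S : Set (ℕ → X)) (hS : SelfStable μ S) :
    ∃ G, S ⊆ G ∧ MaximalSelfStable μ G := by
  obtain ⟨G, hSG, hGmax⟩ := zorn_subset_nonempty {T : Set (ℕ → X) | SelfStable μ T}
    (fun c hc hchain _ => ⟨⋃₀ c, by
      intro y hy z hz
      obtain ⟨Ty, hTy, hyTy⟩ := hy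
      obtain ⟨Tz, hTz, hzTz⟩ := hz
      rcases hchain.total hTy hTz with h | h
      · exact hc hTz y (h hyTy) z hzTz
      · exact hc hTy y hyTy z (h hzTz), fun s hs => subset_sUnion_of_mem hs⟩) S hS
  refine ⟨G, hSG, hGmax.prop, ?_⟩
  intro z
  by_cases hz : z ∈ G
  · exact Or.inl hz
  · by_contra hcon
    push_neg at hcon
    obtain ⟨-, hall⟩ := hcon
    have hins : SelfStable μ (insert z G) := by
      intro y hy w hw
      rcases mem_insert_iff.mp hy with hyz | hy <;> rcases mem_insert_iff.mp hw with hwz | hw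
      · rw [hyz, hwz]; exact mutuallyStable_self μ z
      · rw [hyz]; exact (hall w hw).symm'
      · rw [hwz]; exact hall y hy
      · exact hGmax.prop y hy w hw
    have : insert z G ⊆ G := hGmax.2 hins (subset_insert _ _)
    exact hz (this (mem_insert _ _))

/-- Lemma 4.4.4. -/
theorem stmt14 {X : Type*} [MetricSpace X] (p : X) (r : ℕ → ℝ) (hr : IsNormalX p r)
    (F : Set (ℕ → X)) (hF : MaximalSelfStable r F) (hpF : (fun _ => p) ∈ F) :
    ∃ nk : ℕ → ℕ, StrictMono nk ∧
      ∃ G : Set (ℕ → X), MaximalSelfStable (fun k => r (nk k)) G ∧ (fun _ => p) ∈ G ∧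
        (∃ c ∈ G, Tendsto (fun k => dist (c k) p / r (nk k)) atTop (𝓝 1)) ∧
        sInf (posLimSetX p (fun k => r (nk k)) G) ≤ sInf (posLimSetX p r F) ∧
        sSup (limSetX p r F) ≤ sSup (limSetX p (fun k => r (nk k)) G) := by
  classical
  obtain ⟨hscal, x, -, hx1⟩ := hr
  obtain ⟨hSS, hmax⟩ := hF
  have hlim : ∀ y ∈ F, ∃ L : ℝ, Tendsto (fun n => dist (y n) p / r n) atTop (𝓝 L) := by
    intro y hy
    obtain ⟨L, hL⟩ := hSS y hy _ hpF
    exact ⟨L, hL⟩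
  -- approximating sequence for the sup
  have hBne : (limSetX p r F).Nonempty := by
    refine ⟨0, (fun _ => p), hpF, 0, ?_, by simp⟩
    have h : (fun n => dist ((fun _ : ℕ => p) n) p / r n) = fun _ => (0 : ℝ) := by
      funext n; simp
    rw [h]; exact tendsto_const_nhds
  obtain ⟨u, -, hu_tend, hu_mem⟩ := exists_seq_tendsto_sSup hBne (OrderTop.bddAbove _)
  choose yb hybF Lb hLb huLb using hu_mem
  -- approximating sequence for the inf (dummy if empty)
  have hA : ∃ ya : ℕ → (ℕ → X), (∀ j, ya j ∈ F) ∧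
      ((posLimSetX p r F).Nonempty →
        ∃ v : ℕ → ℝ≥0∞, Tendsto v atTop (𝓝 (sInf (posLimSetX p r F))) ∧
          ∀ j, ∃ L : ℝ, Tendsto (fun n => dist (ya j n) p / r n) atTop (𝓝 L) ∧
            0 < L ∧ v j = ENNReal.ofReal L) := by
    by_cases hne : (posLimSetX p r F).Nonempty
    · obtain ⟨v, -, hv_tend, hv_mem⟩ := exists_seq_tendsto_sInf hne (OrderBot.bddBelow _)
      choose ya hyaF L hL hLpos hvL using hv_mem
      exact ⟨ya, hyaF, fun _ => ⟨v, hv_tend, fun j => ⟨L j, hL j, hLpos j, hvL j⟩⟩⟩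
    · exact ⟨fun _ => fun _ => p, fun _ => hpF, fun h => absurd h hne⟩
  obtain ⟨ya, hyaF, hAprop⟩ := hA
  -- countable family
  set w : ℕ → ℕ → X := fun j n =>
    if j = 0 then p else if (j - 1) % 2 = 0 then ya ((j - 1) / 2) n else yb ((j - 1) / 2) n
    with hw
  have hwF : ∀ j, w j ∈ F := by
    intro j
    by_cases h0 : j = 0
    · simpa [w, h0] using hpF
    · by_cases h1 : (j - 1) % 2 = 0
      · simpa [w, h0, h1] using hyaF ((j - 1) / 2)
      · simpa [w, h0, h1] using hybF ((j - 1) / 2)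
  have hw0 : w 0 = fun _ => p := by funext n; simp [w]
  have hwa : ∀ j, w (2 * j + 1) = ya j := by
    intro j; funext n; simp [w, Nat.mul_mod_right, Nat.mul_div_cancel_left]
  have hwb : ∀ j, w (2 * j + 2) = yb j := by
    intro j
    funext n
    have h1 : (2 * j + 1) % 2 ≠ 0 := by omega
    have h2 : (2 * j + 1) / 2 = j := by omega
    simp [w, h1, h2]
  -- limits of the countable family
  choose Lw hLw using fun j => hlim _ (hwF j)
  -- diagonal extraction via compactness
  set g : ℕ → ℕ → ℝ≥0∞ := fun n j => ENNReal.ofReal (dist (x n) (w j n) / r n) with hg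
  obtain ⟨a, -, nk, hnk, hga⟩ :=
    IsCompact.tendsto_subseq (isCompact_univ) (fun n => Set.mem_univ (g n))
  have hnk_top : Tendsto nk atTop atTop := hnk.tendsto_atTop
  have hcoord : ∀ j, Tendsto (fun k => g (nk k) j) atTop (𝓝 (a j)) := by
    intro j
    exact (tendsto_pi_nhds.mp hga) j
  have hatop : ∀ j, a j ≠ ⊤ := by
    intro j
    have h1 : ∀ᶠ n in atTop, dist (x n) p / r n ≤ 2 :=
      hx1.eventually_le_const (by norm_num)
    have h2 : ∀ᶠ n in atTop, dist (w j n) p / r n ≤ Lw j + 1 :=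
      (hLw j).eventually_le_const (by linarith)
    have hbound : ∀ᶠ n in atTop, g n j ≤ ENNReal.ofReal (2 + (Lw j + 1)) := by
      filter_upwards [h1, h2] with n h1n h2n
      refine ENNReal.ofReal_le_ofReal ?_
      have hr0 : 0 < r n := hscal.1 n
      have htri : dist (x n) (w j n) ≤ dist (x n) p + dist (w j n) p := by
        have := dist_triangle (x n) p (w j n)
        simpa [dist_comm] using this
      calc dist (x n) (w j n) / r n ≤ (dist (x n) p + dist (w j n) p) / r n := by
            gcongr
        _ = dist (x n) p / r n + dist (w j n) p / r n := add_div _ _ _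
        _ ≤ 2 + (Lw j + 1) := add_le_add h1n h2n
    have : a j ≤ ENNReal.ofReal (2 + (Lw j + 1)) :=
      le_of_tendsto (hcoord j) (hnk_top.eventually hbound)
    exact ne_top_of_le_ne_top ENNReal.ofReal_ne_top this
  have hxw : ∀ j, Tendsto (fun k => dist (x (nk k)) (w j (nk k)) / r (nk k)) atTop
      (𝓝 (a j).toReal) := by
    intro j
    have h := (ENNReal.tendsto_toReal (hatop j)).comp (hcoord j)
    have heq : (fun k => (g (nk k) j).toReal)
        = fun k => dist (x (nk k)) (w j (nk k)) / r (nk k) := by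
      funext k
      exact ENNReal.toReal_ofReal (div_nonneg dist_nonneg (hscal.1 _).le)
    rw [← heq]; exact h
  -- the self-stable seed family
  set μ : ℕ → ℝ := fun k => r (nk k) with hμ
  set c : ℕ → X := fun k => x (nk k) with hc
  set S : Set (ℕ → X) := insert c {q | ∃ j, q = fun k => w j (nk k)} with hSdef
  have hstab_xw : ∀ j, MutuallyStable μ c (fun k => w j (nk k)) := fun j => ⟨_, hxw j⟩
  have hstab_ww : ∀ i j, MutuallyStable μ (fun k => w i (nk k)) (fun k => w j (nk k)) := by
    intro i j
    obtain ⟨L, hL⟩ := hSS _ (hwF i) _ (hwF j)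
    exact ⟨L, hL.comp hnk_top⟩
  have hSS' : SelfStable μ S := by
    intro y hy z hz
    rcases mem_insert_iff.mp hy with hyc | ⟨i, hyi⟩ <;>
      rcases mem_insert_iff.mp hz with hzc | ⟨j, hzj⟩
    · rw [hyc, hzc]; exact mutuallyStable_self μ c
    · rw [hyc, hzj]; exact hstab_xw j
    · rw [hyi, hzc]; exact (hstab_xw i).symm'
    · rw [hyi, hzj]; exact hstab_ww i j
  obtain ⟨G, hSG, hGmss⟩ := exists_maximalSelfStable μ S hSS'
  have hpG : (fun _ => p) ∈ G := by
    refine hSG (Or.inr ⟨0, ?_⟩)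
    funext k; rw [hw0]
  refine ⟨nk, hnk, G, hGmss, hpG, ⟨c, hSG (mem_insert _ _), hx1.comp hnk_top⟩, ?_, ?_⟩
  · -- inf inequality
    by_cases hne : (posLimSetX p r F).Nonempty
    · obtain ⟨v, hv_tend, hv⟩ := hAprop hne
      refine ge_of_tendsto hv_tend (Eventually.of_forall fun j => ?_)
      obtain ⟨L, hL, hLpos, hvL⟩ := hv j
      refine sInf_le ⟨fun k => ya j (nk k), ?_, L, hL.comp hnk_top, hLpos, hvL⟩
      refine hSG (Or.inr ⟨2 * j + 1, ?_⟩)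
      funext k; rw [hwa]
    · rw [not_nonempty_iff_eq_empty.mp hne, sInf_empty]
      exact le_top
  · -- sup inequality
    refine le_of_tendsto hu_tend (Eventually.of_forall fun j => ?_)
    refine le_sSup ⟨fun k => yb j (nk k), ?_, Lb j, (hLb j).comp hnk_top, huLb j⟩
    refine hSG (Or.inr ⟨2 * j + 2, ?_⟩)
    funext k; rw [hwb]
end

section
/- Let (X,d,p) be a pointed metric space with p an accumulation point of X, and let E = S_p(X) = {d(x,p) : x ∈ X}. The following three conditions are equivalent: (i) the family Ω_p^X(n) is uniformly bounded; (ii) the family Ω_p^X(n) is uniformly discrete; (iii) E is completely strongly porous at 0. Moreover, if Ω_p^X(n) is uniformly bounded, then R*(Ω_p^X(n)) = M(L̃) and R_*(Ω_p^X(n)) = 1/M(L̃) for every universal element L̃ of Ĩ_Eᵈ. -/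
open Filter Topology Set
open scoped ENNReal

namespace S15

def Acc0 (E : Set ℝ) : Prop := ∀ ε : ℝ, 0 < ε → ∃ e ∈ E, 0 < e ∧ e < ε

def Ach (E : Set ℝ) : Set ℝ :=
  {L | ∃ τ s : ℕ → ℝ, (∀ n, τ n ∈ E ∧ 0 < τ n) ∧ AlmostDecreasing τ ∧
    Tendsto τ atTop (𝓝 0) ∧ (∀ n, s n ∈ E) ∧
    Tendsto (fun n => s n / τ n) atTop (𝓝 L)}

noncomputable def RR (E : Set ℝ) : ℝ≥0∞ := sSup (ENNReal.ofReal '' Ach E)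
noncomputable def Rl (E : Set ℝ) : ℝ≥0∞ := sInf (ENNReal.ofReal '' (Ach E ∩ Ioi 0))

lemma exists_strictAnti {E : Set ℝ} (hE : Acc0 E) :
    ∃ t : ℕ → ℝ, (∀ n, t n ∈ E ∧ 0 < t n) ∧ StrictAnti t ∧ Tendsto t atTop (𝓝 0) := by
  choose f hmem hpos hlt using hE
  have hrec : ∀ n : ℕ, ∀ x : ℝ, 0 < x → 0 < min x ((n + 1 : ℝ))⁻¹ := by
    intro n x hx
    have : (0:ℝ) < ((n:ℝ) + 1)⁻¹ := by positivity
    exact lt_min hx this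
  let g : ℕ → {x : ℝ // x ∈ E ∧ 0 < x} := fun n =>
    Nat.rec ⟨f 1 one_pos, hmem 1 one_pos, hpos 1 one_pos⟩
      (fun n prev => ⟨f _ (hrec n prev.1 prev.2.2),
        hmem _ (hrec n prev.1 prev.2.2), hpos _ (hrec n prev.1 prev.2.2)⟩) n
  refine ⟨fun n => (g n).1, fun n => (g n).2, ?_, ?_⟩
  · apply strictAnti_nat_of_succ_lt
    intro n
    have := hlt _ (hrec n (g n).1 (g n).2.2)
    exact this.trans_le (min_le_left _ _)
  · have hb : ∀ n : ℕ, (g (n+1)).1 ≤ ((n:ℝ) + 1)⁻¹ := by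
      intro n
      have := hlt _ (hrec n (g n).1 (g n).2.2)
      exact (this.trans_le (min_le_right _ _)).le
    apply squeeze_zero' (Eventually.of_forall fun n => (g n).2.2.le)
      (g := fun n : ℕ => ((n:ℝ))⁻¹)
    · filter_upwards [eventually_ge_atTop 1] with n hn
      obtain ⟨k, rfl⟩ : ∃ k, n = k + 1 := ⟨n - 1, by omega⟩
      refine (hb k).trans ?_
      push_cast
      exact le_rfl
    · exact tendsto_inv_atTop_zero.comp tendsto_natCast_atTop_atTop

variable {E : Set ℝ} {L : ℝ}

lemma almostDecreasing_of_strictAnti {t : ℕ → ℝ} (h : StrictAnti t) : AlmostDecreasing t :=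
  Eventually.of_forall fun n => (h (Nat.lt_succ_self n)).le

lemma one_mem_Ach (hE : Acc0 E) : (1:ℝ) ∈ Ach E := by
  obtain ⟨t, ht, hanti, htend⟩ := exists_strictAnti hE
  refine ⟨t, t, ht, almostDecreasing_of_strictAnti hanti, htend, fun n => (ht n).1, ?_⟩
  have : (fun n => t n / t n) = fun _ => (1:ℝ) := funext fun n => div_self (ht n).2.ne'
  rw [this]; exact tendsto_const_nhds

lemma Ach_nonneg (hE0 : ∀ e ∈ E, 0 ≤ e) (hL : L ∈ Ach E) : 0 ≤ L := by
  obtain ⟨τ, s, hτ, _, _, hs, hlim⟩ := hL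
  exact ge_of_tendsto hlim (Eventually.of_forall fun n =>
    div_nonneg (hE0 _ (hs n)) (hτ n).2.le)

lemma inv_mem_Ach (hL : L ∈ Ach E) (hLpos : 0 < L) : L⁻¹ ∈ Ach E := by
  obtain ⟨τ, s, hτ, hdec, h0, hs, hlim⟩ := hL
  have hspos : ∀ᶠ n in atTop, 0 < s n := by
    filter_upwards [hlim.eventually_const_lt (half_lt_self hLpos)] with n hn
    have : 0 < s n / τ n := lt_trans (half_pos hLpos) hn
    rcases div_pos_iff.mp this with ⟨h, _⟩ | ⟨_, h⟩
    · exact h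
    · exact absurd (hτ n).2 (not_lt.mpr h.le)
  have hs0 : Tendsto s atTop (𝓝 0) := by
    have h1 : Tendsto (fun n => τ n * (s n / τ n)) atTop (𝓝 (0 * L)) := h0.mul hlim
    rw [zero_mul] at h1
    refine h1.congr fun n => ?_
    rw [mul_comm]; exact div_mul_cancel₀ _ (hτ n).2.ne'
  -- extract subsequence where s is strictly decreasing and positive
  have key : ∀ N : ℕ, ∀ c : ℝ, 0 < c → ∃ n, N ≤ n ∧ 0 < s n ∧ s n < c := by
    intro N c hc
    rcases ((hspos.and (hs0.eventually_lt_const hc)).and (eventually_ge_atTop N)).exists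
      with ⟨n, ⟨h1, h2⟩, h3⟩
    exact ⟨n, h3, h1, h2⟩
  let F : ℕ → {n : ℕ // 0 < s n} := fun i =>
    Nat.rec ⟨(key 0 1 one_pos).choose, (key 0 1 one_pos).choose_spec.2.1⟩
      (fun _ prev =>
        ⟨(key (prev.1 + 1) (s prev.1) prev.2).choose,
          (key (prev.1 + 1) (s prev.1) prev.2).choose_spec.2.1⟩) i
  have hFmono : StrictMono fun i => (F i).1 := by
    apply strictMono_nat_of_lt_succ
    intro i
    exact Nat.lt_of_succ_le (key ((F i).1 + 1) (s (F i).1) (F i).2).choose_spec.1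
  have hFdec : ∀ i, s ((F (i+1)).1) < s ((F i).1) := fun i =>
    (key ((F i).1 + 1) (s (F i).1) (F i).2).choose_spec.2.2
  refine ⟨fun i => s ((F i).1), fun i => τ ((F i).1),
    fun i => ⟨hs _, (F i).2⟩, ?_, ?_, fun i => (hτ _).1, ?_⟩
  · exact Eventually.of_forall fun i => (hFdec i).le
  · exact hs0.comp (hFmono.tendsto_atTop)
  · have h1 : Tendsto (fun i => s ((F i).1) / τ ((F i).1)) atTop (𝓝 L) :=
      hlim.comp (hFmono.tendsto_atTop)
    have h2 := h1.inv₀ hLpos.ne'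
    refine h2.congr fun i => ?_
    rw [inv_div]

variable {X : Type*} [MetricSpace X]

/-- the distance set -/
def Ep (p : X) : Set ℝ := {t : ℝ | ∃ x : X, dist x p = t}

lemma Ep_nonneg (p : X) : ∀ e ∈ Ep p, 0 ≤ e := by rintro e ⟨x, rfl⟩; exact dist_nonneg

lemma Ep_acc {p : X} (hp : p ∈ closure ({p}ᶜ : Set X)) : Acc0 (Ep p) := by
  intro ε hε
  rcases Metric.mem_closure_iff.mp hp ε hε with ⟨x, hx, hd⟩
  exact ⟨dist x p, ⟨x, rfl⟩, dist_pos.mpr hx, by rwa [dist_comm] at hd⟩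

lemma ach_of_normal {p : X} {r : ℕ → ℝ} {x : ℕ → X} {L : ℝ} (h1 : IsNormalX p r)
    (hxL : Tendsto (fun n => dist (x n) p / r n) atTop (𝓝 L)) : L ∈ Ach (Ep p) := by
  obtain ⟨⟨hrpos, hr0⟩, x₀, hx₀dec, hx₀⟩ := h1
  set τ₀ : ℕ → ℝ := fun n => dist (x₀ n) p with hτ₀
  set s₀ : ℕ → ℝ := fun n => dist (x n) p with hs₀
  have hposev : ∀ᶠ n in atTop, 0 < τ₀ n := by
    filter_upwards [hx₀.eventually_const_lt (by norm_num : (1:ℝ)/2 < 1)] with n hn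
    rcases div_pos_iff.mp (lt_trans (by norm_num) hn) with ⟨h, _⟩ | ⟨_, h⟩
    · exact h
    · exact absurd (hrpos n) (not_lt.mpr h.le)
  obtain ⟨N₁, hN₁⟩ := eventually_atTop.mp hposev
  obtain ⟨N₂, hN₂⟩ := eventually_atTop.mp hx₀dec
  set N := max N₁ N₂ with hN
  have hτ0tend : Tendsto τ₀ atTop (𝓝 0) := by
    have h1 : Tendsto (fun n => r n * (τ₀ n / r n)) atTop (𝓝 (0 * 1)) := hr0.mul hx₀
    rw [zero_mul] at h1
    refine h1.congr fun n => ?_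
    rw [mul_comm]; exact div_mul_cancel₀ _ (hrpos n).ne'
  have hratio : Tendsto (fun n => s₀ n / τ₀ n) atTop (𝓝 L) := by
    have h1 : Tendsto (fun n => (s₀ n / r n) / (τ₀ n / r n)) atTop (𝓝 (L / 1)) :=
      hxL.div hx₀ one_ne_zero
    rw [div_one] at h1
    refine Tendsto.congr' ?_ h1
    filter_upwards [hposev] with n hn
    rw [div_div_div_cancel_right₀]
    exact (hrpos n).ne'
  refine ⟨fun n => τ₀ (n + N), fun n => s₀ (n + N),
    fun n => ⟨⟨x₀ (n + N), rfl⟩, hN₁ _ (le_trans (le_max_left _ _) (Nat.le_add_left N n))⟩,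
    Eventually.of_forall fun n => ?_,
    (tendsto_add_atTop_iff_nat N).mpr hτ0tend, fun n => ⟨x (n + N), rfl⟩,
    (tendsto_add_atTop_iff_nat N).mpr hratio⟩
  simpa [Nat.add_right_comm n 1 N] using
    hN₂ (n + N) (le_trans (le_max_right _ _) (Nat.le_add_left N n))

lemma normal_of_ach {p : X} {L : ℝ} (hL : L ∈ Ach (Ep p)) :
    ∃ (r : ℕ → ℝ) (x : ℕ → X), IsNormalX p r ∧
      Tendsto (fun n => dist (x n) p / r n) atTop (𝓝 L) := by
  obtain ⟨τ, s, hτ, hdec, h0, hs, hlim⟩ := hL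
  choose xτ hxτ using fun n => (hτ n).1
  choose xs hxs using hs
  have hτfun : (fun n => dist (xτ n) p) = τ := funext hxτ
  refine ⟨τ, xs, ⟨⟨fun n => (hτ n).2, h0⟩, xτ, ?_, ?_⟩, ?_⟩
  · rw [hτfun]; exact hdec
  · exact (tendsto_const_nhds : Tendsto (fun _ : ℕ => (1:ℝ)) atTop (𝓝 1)).congr fun n => by
      rw [hxτ n, div_self (hτ n).2.ne']
  · exact hlim.congr fun n => by rw [hxs n]

lemma rstarX_eq (p : X) : RstarX p = RR (Ep p) := by
  rw [RstarX, RR]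
  congr 1
  ext c
  constructor
  · rintro ⟨r, x, L, h1, h2, rfl⟩
    exact ⟨L, ach_of_normal h1 h2, rfl⟩
  · rintro ⟨L, hL, rfl⟩
    obtain ⟨r, x, h1, h2⟩ := normal_of_ach hL
    exact ⟨r, x, L, h1, h2, rfl⟩

lemma rlowX_eq (p : X) : RlowX p = Rl (Ep p) := by
  rw [RlowX, Rl]
  congr 1
  ext c
  constructor
  · rintro ⟨r, x, L, h1, h2, h3, rfl⟩
    exact ⟨L, ⟨ach_of_normal h1 h2, h3⟩, rfl⟩
  · rintro ⟨L, ⟨hL, hLpos⟩, rfl⟩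
    obtain ⟨r, x, h1, h2⟩ := normal_of_ach hL
    exact ⟨r, x, L, h1, h2, hLpos, rfl⟩

variable {E : Set ℝ}

lemma ofReal_mem_RR {L : ℝ} (hL : L ∈ Ach E) : ENNReal.ofReal L ≤ RR E :=
  le_sSup ⟨L, hL, rfl⟩

lemma one_le_RR (hE : Acc0 E) : 1 ≤ RR E := by
  have := ofReal_mem_RR (one_mem_Ach hE)
  rwa [ENNReal.ofReal_one] at this

lemma Rl_eq_inv (hE : Acc0 E) : Rl E = (RR E)⁻¹ := by
  apply le_antisymm
  · rw [← inv_inv (Rl E), ENNReal.inv_le_inv]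
    apply sSup_le
    rintro c ⟨L, hL, rfl⟩
    rcases le_or_gt L 0 with h | h
    · rw [ENNReal.ofReal_of_nonpos h]; exact zero_le
    · have hinv : ENNReal.ofReal L⁻¹ ∈ ENNReal.ofReal '' (Ach E ∩ Ioi 0) :=
        ⟨L⁻¹, ⟨inv_mem_Ach hL h, inv_pos.mpr h⟩, rfl⟩
      have h1 : Rl E ≤ (ENNReal.ofReal L)⁻¹ := by
        rw [← ENNReal.ofReal_inv_of_pos h]; exact sInf_le hinv
      calc ENNReal.ofReal L = ((ENNReal.ofReal L)⁻¹)⁻¹ := (inv_inv _).symm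
        _ ≤ (Rl E)⁻¹ := ENNReal.inv_le_inv' h1
  · apply le_sInf
    rintro c ⟨L, ⟨hL, hLpos⟩, rfl⟩
    have hmem : L ∈ Ioi (0:ℝ) := hLpos
    have h1 : ENNReal.ofReal L⁻¹ ≤ RR E := ofReal_mem_RR (inv_mem_Ach hL hmem)
    have h2 : (RR E)⁻¹ ≤ (ENNReal.ofReal L⁻¹)⁻¹ := ENNReal.inv_le_inv' h1
    rwa [ENNReal.ofReal_inv_of_pos hmem, inv_inv] at h2

variable {E : Set ℝ}

lemma seq_rec_choice {α : Type*} (P : α → Prop) (R : ℕ → α → α → Prop)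
    (h0 : ∃ a, P a) (hstep : ∀ n a, P a → ∃ b, P b ∧ R n a b) :
    ∃ f : ℕ → α, (∀ n, P (f n)) ∧ ∀ n, R n (f n) (f (n+1)) := by
  choose a0 ha0 using h0
  choose step hstepP hstepR using hstep
  let g : ℕ → {x : α // P x} := fun n =>
    Nat.rec ⟨a0, ha0⟩ (fun n prev => ⟨step n prev.1 prev.2, hstepP n prev.1 prev.2⟩) n
  exact ⟨fun n => (g n).1, fun n => (g n).2, fun n => hstepR n (g n).1 (g n).2⟩

lemma tendsto_zero_of_bound {e : ℕ → ℝ} (hpos : ∀ n, 0 ≤ e n)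
    (hb : ∀ n, e (n+1) ≤ ((n:ℝ)+1)⁻¹) : Tendsto e atTop (𝓝 0) := by
  apply squeeze_zero' (Eventually.of_forall hpos) (g := fun n : ℕ => ((n:ℝ))⁻¹)
  · filter_upwards [eventually_ge_atTop 1] with n hn
    obtain ⟨k, rfl⟩ : ∃ k, n = k + 1 := ⟨n - 1, by omega⟩
    refine (hb k).trans ?_
    push_cast
    exact le_rfl
  · exact tendsto_inv_atTop_zero.comp tendsto_natCast_atTop_atTop

/-- Fact 1: if `R* < ∞` and `u > toReal R*`, then at small scales there is no
pair of points of `E` with ratio in `(u, v]`. -/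
lemma pair_gap (hE0 : ∀ e ∈ E, 0 ≤ e) (hfin : RR E ≠ ⊤) {u v : ℝ}
    (hu : (RR E).toReal < u) :
    ∃ δ > 0, ∀ e ∈ E, 0 < e → e < δ → ∀ e' ∈ E, u * e < e' → v * e < e' := by
  by_contra hcon
  push_neg at hcon
  have key : ∀ c : ℝ, 0 < c → ∃ q : ℝ × ℝ,
      (q.1 ∈ E ∧ 0 < q.1 ∧ q.2 ∈ E ∧ u * q.1 < q.2 ∧ q.2 ≤ v * q.1) ∧ q.1 < c := by
    intro c hc
    obtain ⟨e, he, hepos, helt, e', he', h1, h2⟩ := hcon c hc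
    exact ⟨(e, e'), ⟨he, hepos, he', h1, h2⟩, helt⟩
  obtain ⟨f, hP, hR⟩ := seq_rec_choice
    (fun q : ℝ × ℝ => q.1 ∈ E ∧ 0 < q.1 ∧ q.2 ∈ E ∧ u * q.1 < q.2 ∧ q.2 ≤ v * q.1)
    (fun n a b => b.1 < min a.1 ((n:ℝ)+1)⁻¹)
    (let h := key 1 one_pos; ⟨h.choose, h.choose_spec.1⟩)
    (fun n a ha =>
      let h := key (min a.1 ((n:ℝ)+1)⁻¹) (lt_min ha.2.1 (by positivity))
      ⟨h.choose, h.choose_spec.1, h.choose_spec.2⟩)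
  set e : ℕ → ℝ := fun i => (f i).1 with he
  set e' : ℕ → ℝ := fun i => (f i).2 with he'
  have hanti : StrictAnti e := strictAnti_nat_of_succ_lt fun n =>
    (hR n).trans_le (min_le_left _ _)
  have hzero : Tendsto e atTop (𝓝 0) :=
    tendsto_zero_of_bound (fun n => (hP n).2.1.le)
      (fun n => ((hR n).trans_le (min_le_right _ _)).le)
  have hrat : ∀ i, u < e' i / e i ∧ e' i / e i ≤ v := by
    intro i
    constructor
    · rw [lt_div_iff₀ (hP i).2.1]
      exact (hP i).2.2.2.1
    · rw [div_le_iff₀ (hP i).2.1]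
      exact (hP i).2.2.2.2
  obtain ⟨a, _, φ, hφ, hconv⟩ := tendsto_subseq_of_bounded (Metric.isBounded_Icc u v)
    (x := fun i => e' i / e i) (fun i => ⟨(hrat i).1.le, (hrat i).2⟩)
  have hua : u ≤ a := ge_of_tendsto hconv (Eventually.of_forall fun i => (hrat (φ i)).1.le)
  have hAch : a ∈ Ach E := by
    refine ⟨fun i => e (φ i), fun i => e' (φ i),
      fun i => ⟨(hP (φ i)).1, (hP (φ i)).2.1⟩,
      Eventually.of_forall fun i => (hanti.antitone (hφ (Nat.lt_succ_self i)).le),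
      hzero.comp hφ.tendsto_atTop, fun i => (hP (φ i)).2.2.1, hconv⟩
  have := ofReal_mem_RR hAch
  rw [ENNReal.ofReal_le_iff_le_toReal hfin] at this
  linarith
lemma pow_gap (hE0 : ∀ e ∈ E, 0 ≤ e) (hfin : RR E ≠ ⊤) {C : ℝ}
    (hC : (RR E).toReal < C) (j : ℕ) :
    ∃ δ > 0, ∀ e ∈ E, 0 < e → e < δ → ∀ e' ∈ E, C * e < e' → C^j * e < e' :=
  pair_gap hE0 hfin hC

variable {E : Set ℝ}

lemma ratio_tendsto {A B e : ℕ → ℝ} {C : ℝ} (hC1 : 1 < C)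
    (hepos : ∀ᶠ n in atTop, 0 < e n)
    (hA : ∀ᶠ n in atTop, A n ≤ C * e n) (hA0 : ∀ᶠ n in atTop, 0 ≤ A n)
    (hB : ∀ j : ℕ, ∀ᶠ n in atTop, C^j * e n ≤ B n) :
    Tendsto (fun n => (B n - A n) / B n) atTop (𝓝 1) := by
  have hC0 : (0:ℝ) < C := lt_trans one_pos hC1
  have hBpos : ∀ᶠ n in atTop, 0 < B n := by
    filter_upwards [hB 1, hepos] with n h1 h2
    calc (0:ℝ) < C^1 * e n := by positivity
      _ ≤ B n := h1
  have hzero : Tendsto (fun n => A n / B n) atTop (𝓝 0) := by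
    rw [tendsto_order]
    constructor
    · intro x hx
      filter_upwards [hA0, hBpos] with n h1 h2
      exact lt_of_lt_of_le hx (div_nonneg h1 h2.le)
    · intro x hx
      have hpow : Tendsto (fun j : ℕ => C^j) atTop atTop :=
        tendsto_pow_atTop_atTop_of_one_lt hC1
      obtain ⟨j, hj⟩ := (hpow.eventually_ge_atTop (C / x + 1)).exists
      have hj' : C / C^j < x := by
        have hCj : (0:ℝ) < C ^ j := by positivity
        have h1 : C / x < C^j := lt_of_lt_of_le (lt_add_one _) hj
        rw [div_lt_iff₀ hx] at h1
        rw [div_lt_iff₀ hCj]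
        linarith
      filter_upwards [hA, hA0, hB j, hepos, hBpos] with n h1 h2 h3 h4 h5
      calc A n / B n ≤ (C * e n) / (C^j * e n) :=
            div_le_div₀ (by positivity) h1 (by positivity) h3
        _ = C / C^j := by rw [mul_div_mul_right _ _ (ne_of_gt h4)]
        _ < x := hj'
  have := (tendsto_const_nhds (x := (1:ℝ)) (f := atTop (α := ℕ))).sub hzero
  rw [sub_zero] at this
  refine Tendsto.congr' ?_ this
  filter_upwards [hBpos] with n hn
  rw [sub_div, div_self hn.ne']

/-- The main gap construction. -/
lemma gap_build (hE0 : ∀ e ∈ E, 0 ≤ e) (hfin : RR E ≠ ⊤) {C : ℝ}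
    (hC : (RR E).toReal < C) (hC1 : 1 < C)
    {e : ℕ → ℝ} (he : ∀ n, e n ∈ E ∧ 0 < e n) (hez : Tendsto e atTop (𝓝 0))
    {e₀ : ℝ} (he₀ : e₀ ∈ E) (he₀pos : 0 < e₀) :
    ∃ a b : ℕ → ℝ,
      (∀ n, a n = sSup (E ∩ Icc 0 (C * e n))) ∧
      (∀ n, e n ≤ a n ∧ a n ≤ C * e n) ∧
      (∀ᶠ n in atTop, IsGapComponent E (a n) (b n)) ∧
      (∀ j : ℕ, ∀ᶠ n in atTop, C^j * e n ≤ b n) ∧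
      (∀ n, ∀ x ∈ E, a n < x → b n ≤ x) := by
  have hC0 : (0:ℝ) < C := lt_trans one_pos hC1
  set a : ℕ → ℝ := fun n => sSup (E ∩ Icc 0 (C * e n)) with ha
  set b : ℕ → ℝ := fun n => sInf (E ∩ Ioi (a n)) with hb
  have hne1 : ∀ n, (E ∩ Icc 0 (C * e n)).Nonempty := fun n =>
    ⟨e n, (he n).1, (he n).2.le, (le_mul_iff_one_le_left (he n).2).mpr hC1.le⟩
  have hbdd1 : ∀ n, BddAbove (E ∩ Icc 0 (C * e n)) := fun n =>
    ⟨C * e n, fun x hx => hx.2.2⟩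
  have hab : ∀ n, e n ≤ a n ∧ a n ≤ C * e n := fun n =>
    ⟨le_csSup (hbdd1 n) ⟨(he n).1, (he n).2.le, (le_mul_iff_one_le_left (he n).2).mpr hC1.le⟩,
     csSup_le (hne1 n) (fun x hx => hx.2.2)⟩
  have hbddb : ∀ n, BddBelow (E ∩ Ioi (a n)) := fun n => ⟨a n, fun x hx => le_of_lt hx.2⟩
  have hbmin : ∀ n, ∀ x ∈ E, a n < x → b n ≤ x := fun n x hx hax => csInf_le (hbddb n) ⟨hx, hax⟩
  -- eventual nonemptiness of E ∩ Ioi (a n)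
  have hevne : ∀ᶠ n in atTop, (E ∩ Ioi (a n)).Nonempty := by
    filter_upwards [hez.eventually_lt_const (show (0:ℝ) < e₀ / C from by positivity)]
      with n hn
    refine ⟨e₀, he₀, ?_⟩
    have : a n ≤ C * e n := (hab n).2
    have : C * e n < e₀ := by
      rw [← lt_div_iff₀' hC0]
      exact hn
    exact lt_of_le_of_lt (hab n).2 this
  -- key lower bound on b
  have hkey : ∀ j : ℕ, ∀ᶠ n in atTop, C^j * e n ≤ b n := by
    intro j
    obtain ⟨δ, hδpos, hδ⟩ := pow_gap hE0 hfin hC j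
    filter_upwards [hevne, hez.eventually_lt_const hδpos] with n h1 h2
    apply le_csInf h1
    rintro x ⟨hxE, hxa⟩
    have hgtC : C * e n < x := by
      by_contra hle
      push_neg at hle
      have : x ≤ a n := le_csSup (hbdd1 n) ⟨hxE, hE0 x hxE, hle⟩
      exact absurd hxa (not_lt.mpr this)
    exact (hδ (e n) (he n).1 (he n).2 h2 x hxE hgtC).le
  have hgap : ∀ᶠ n in atTop, IsGapComponent E (a n) (b n) := by
    filter_upwards [hevne, hkey 2] with n h1 h2
    have hapos : 0 < a n := lt_of_lt_of_le (he n).2 (hab n).1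
    have haltb : a n < b n := by
      have hCC : C * e n < C^2 * e n := by
        have : C < C^2 := by nlinarith
        exact mul_lt_mul_of_pos_right this (he n).2
      exact lt_of_le_of_lt (hab n).2 (lt_of_lt_of_le hCC h2)
    refine ⟨hapos.le, haltb, ?_, ?_⟩
    · rw [eq_empty_iff_forall_notMem]
      rintro x ⟨⟨hx1, hx2⟩, hxE⟩
      exact absurd (hbmin n x hxE hx1) (not_le.mpr hx2)
    · rintro a' b' _ ha' hb' hempty
      constructor
      · by_contra hne
        have hlt : a' < a n := lt_of_le_of_ne ha' hne
        obtain ⟨x, hx, hax⟩ := exists_lt_of_lt_csSup (hne1 n) hlt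
        have hmem : x ∈ Ioo a' b' ∩ E :=
          ⟨⟨hax, lt_of_le_of_lt (le_csSup (hbdd1 n) hx) (lt_of_lt_of_le haltb hb')⟩, hx.1⟩
        rw [hempty] at hmem
        exact hmem
      · by_contra hne
        have hlt : b n < b' := lt_of_le_of_ne hb' (fun h => hne h.symm)
        obtain ⟨x, hx, hxb⟩ := exists_lt_of_csInf_lt h1 hlt
        have hmem : x ∈ Ioo a' b' ∩ E := ⟨⟨lt_of_le_of_lt ha' hx.2, hxb⟩, hx.1⟩
        rw [hempty] at hmem
        exact hmem
  exact ⟨a, b, fun n => rfl, hab, hgap, hkey, hbmin⟩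

variable {E : Set ℝ}

lemma csp_of_fin (hE0 : ∀ e ∈ E, 0 ≤ e) (hacc : Acc0 E) (hfin : RR E ≠ ⊤) : CSP E := by
  intro t ht
  obtain ⟨hdec, hmem, hz⟩ := ht
  have htpos : ∀ n, 0 < t n := fun n =>
    lt_of_le_of_ne (hE0 _ (hmem n).1) (Ne.symm (hmem n).2)
  set C : ℝ := max ((RR E).toReal + 1) 2 with hCdef
  have hC : (RR E).toReal < C := lt_of_lt_of_le (lt_add_one _) (le_max_left _ _)
  have hC1 : (1:ℝ) < C := lt_of_lt_of_le one_lt_two (le_max_right _ _)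
  have hC0 : (0:ℝ) < C := lt_trans one_pos hC1
  obtain ⟨e₀, he₀, he₀pos, _⟩ := hacc 1 one_pos
  obtain ⟨a, b, hadef, hab, hgap, hkey, hbmin⟩ := gap_build hE0 hfin hC hC1
    (fun n => ⟨(hmem n).1, htpos n⟩) hz he₀ he₀pos
  -- monotonicity threshold
  obtain ⟨N₀, hN₀⟩ := eventually_atTop.mp hdec
  have hmono : ∀ n, N₀ ≤ n → a (n+1) ≤ a n := by
    intro n hn
    rw [hadef, hadef]
    apply csSup_le_csSup ⟨C * t n, fun x hx => hx.2.2⟩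
    · exact ⟨t (n+1), (hmem (n+1)).1, (htpos (n+1)).le,
        (le_mul_iff_one_le_left (htpos (n+1))).mpr hC1.le⟩
    · rintro x ⟨hxE, hx0, hxle⟩
      exact ⟨hxE, hx0, hxle.trans (by nlinarith [hN₀ n hn, htpos (n+1)])⟩
  obtain ⟨N₁, hN₁⟩ := eventually_atTop.mp hgap
  set N := max N₀ N₁ with hNdef
  set A : ℕ → ℝ := fun n => a (max n N) with hAdef
  set B : ℕ → ℝ := fun n => b (max n N) with hBdef
  have hmaxt : Tendsto (fun n => max n N) atTop atTop :=
    tendsto_atTop_mono (fun n => le_max_left n N) tendsto_id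
  refine ⟨A, B, ⟨?_, ?_, ?_, ?_⟩, ?_⟩
  · intro n
    exact hN₁ _ (le_trans (le_max_right _ _) (le_max_right n N))
  · -- almost decreasing
    rw [AlmostDecreasing]
    filter_upwards [eventually_ge_atTop N] with n hn
    have h1 : max (n+1) N = n+1 := max_eq_left (by omega)
    have h2 : max n N = n := max_eq_left hn
    rw [hAdef]
    simp only [h1, h2]
    exact hmono n (le_trans (le_max_left _ _) hn)
  · -- tendsto 0
    apply squeeze_zero' (f := A) (g := fun n => C * t (max n N))
    · exact Eventually.of_forall fun n => (htpos _).le.trans (hab _).1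
    · exact Eventually.of_forall fun n => (hab _).2
    · have := (hz.comp hmaxt).const_mul C
      simpa using this
  · -- ratio tendsto 1
    apply ratio_tendsto hC1 (e := fun n => t (max n N))
    · exact Eventually.of_forall fun n => htpos _
    · exact Eventually.of_forall fun n => (hab _).2
    · exact Eventually.of_forall fun n => (htpos _).le.trans (hab _).1
    · intro j
      obtain ⟨M, hM⟩ := eventually_atTop.mp (hkey j)
      filter_upwards [eventually_ge_atTop M] with n hn
      exact hM _ (le_trans hn (le_max_left n N))
  · -- Asymp
    set P : ℝ := a N with hPdef
    have hPpos : 0 < P := lt_of_lt_of_le (htpos N) (hab N).1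
    have hne : ((Finset.range (N+1)).image (fun n => P / (2 * t n))).Nonempty :=
      Finset.Nonempty.image ⟨0, Finset.mem_range.mpr (Nat.succ_pos N)⟩ _
    have hne2 : ((Finset.range (N+1)).image (fun n => 2 * P / t n)).Nonempty :=
      Finset.Nonempty.image ⟨0, Finset.mem_range.mpr (Nat.succ_pos N)⟩ _
    set c₁ : ℝ := min (1/2) (((Finset.range (N+1)).image (fun n => P / (2 * t n))).min' hne)
    set c₂ : ℝ := max (C+1) (((Finset.range (N+1)).image (fun n => 2 * P / t n)).max' hne2)
    have hc₁pos : 0 < c₁ := by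
      apply lt_min (by norm_num)
      obtain ⟨n, _, hval⟩ := Finset.mem_image.mp (Finset.min'_mem _ hne)
      rw [← hval]
      exact div_pos hPpos (mul_pos two_pos (htpos n))
    have hc₂pos : 0 < c₂ := lt_of_lt_of_le (by positivity) (le_max_left _ _)
    refine ⟨c₁, c₂, hc₁pos, hc₂pos, fun n => ?_⟩
    rcases le_or_gt N n with hn | hn
    · have h2 : max n N = n := max_eq_left hn
      constructor
      · rw [hAdef]; simp only [h2]
        calc c₁ * t n ≤ (1/2) * t n := by
              apply mul_le_mul_of_nonneg_right (min_le_left _ _) (htpos n).le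
          _ < t n := by nlinarith [htpos n]
          _ ≤ a n := (hab n).1
      · rw [hAdef]; simp only [h2]
        calc a n ≤ C * t n := (hab n).2
          _ < c₂ * t n := by
              apply mul_lt_mul_of_pos_right _ (htpos n)
              exact lt_of_lt_of_le (lt_add_one C) (le_max_left _ _)
    · have h2 : max n N = N := max_eq_right hn.le
      have hnmem : n ∈ Finset.range (N+1) := Finset.mem_range.mpr (by omega)
      constructor
      · rw [hAdef]; simp only [h2, ← hPdef]
        have : c₁ ≤ P / (2 * t n) :=
          le_trans (min_le_right _ _) (Finset.min'_le _ _
            (Finset.mem_image_of_mem (fun n => P / (2 * t n)) hnmem))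
        have h3 : c₁ * (2 * t n) ≤ P := (le_div_iff₀ (mul_pos two_pos (htpos n))).mp this
        nlinarith [htpos n, hc₁pos]
      · rw [hAdef]; simp only [h2, ← hPdef]
        have : 2 * P / t n ≤ c₂ :=
          le_trans (Finset.le_max' _ _
            (Finset.mem_image_of_mem (fun n => 2 * P / t n) hnmem)) (le_max_right _ _)
        have h3 : 2 * P ≤ c₂ * t n := (div_le_iff₀ (htpos n)).mp this
        nlinarith [htpos n]

variable {E : Set ℝ}

lemma seq_rec_choice' {α : Type*} (P : ℕ → α → Prop) (R : ℕ → α → α → Prop)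
    (h0 : ∃ a, P 0 a) (hstep : ∀ n a, P n a → ∃ b, P (n+1) b ∧ R n a b) :
    ∃ f : ℕ → α, (∀ n, P n (f n)) ∧ ∀ n, R n (f n) (f (n+1)) := by
  choose a0 ha0 using h0
  choose step hstepP hstepR using hstep
  let g : (n : ℕ) → {a : α // P n a} := fun n =>
    Nat.rec ⟨a0, ha0⟩ (fun k prev => ⟨step k prev.1 prev.2, hstepP k prev.1 prev.2⟩) n
  exact ⟨fun n => (g n).1, fun n => (g n).2, fun n => hstepR n (g n).1 (g n).2⟩

lemma fin_of_csp (hE0 : ∀ e ∈ E, 0 ≤ e) (hcsp : CSP E) : RR E ≠ ⊤ := by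
  intro htop
  -- arbitrarily large achievable limits
  have hbig : ∀ k : ℕ, ∃ L : ℝ, L ∈ Ach E ∧ (k:ℝ) < L := by
    intro k
    have := sSup_eq_top.mp htop (ENNReal.ofReal k) ENNReal.ofReal_lt_top
    obtain ⟨c, ⟨L, hL, rfl⟩, hlt⟩ := this
    refine ⟨L, hL, ?_⟩
    by_contra hle
    push_neg at hle
    exact absurd (ENNReal.ofReal_le_ofReal hle) (not_le.mpr hlt)
  choose Lk hLk hLkgt using hbig
  have hunpack : ∀ k, ∃ τ s : ℕ → ℝ, (∀ n, τ n ∈ E ∧ 0 < τ n) ∧ AlmostDecreasing τ ∧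
      Tendsto τ atTop (𝓝 0) ∧ (∀ n, s n ∈ E) ∧
      Tendsto (fun n => s n / τ n) atTop (𝓝 (Lk k)) := fun k => hLk k
  choose τ s hτ hdec hz hs hlim using hunpack
  set lab : ℕ → ℕ := fun i => (Nat.unpair i).1 with hlab
  -- the diagonal sequence
  have hpick : ∀ (j : ℕ) (c : ℝ), 0 < c → ∃ q : ℝ × ℝ,
      (q.1 ∈ E ∧ 0 < q.1 ∧ q.2 ∈ E ∧ |q.2 / q.1 - Lk j| < 1) ∧ q.1 < c := by
    intro j c hc
    have h1 : ∀ᶠ n in atTop, |s j n / τ j n - Lk j| < 1 := by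
      have := (hlim j).sub_const (Lk j)
      rw [sub_self] at this
      have h3 := Metric.tendsto_nhds.mp this 1 one_pos
      filter_upwards [h3] with n hn
      simpa [Real.dist_eq] using hn
    have h2 : ∀ᶠ n in atTop, τ j n < c := (hz j).eventually_lt_const hc
    obtain ⟨n, hn1, hn2⟩ := (h1.and h2).exists
    exact ⟨(τ j n, s j n), ⟨(hτ j n).1, (hτ j n).2, hs j n, hn1⟩, hn2⟩
  obtain ⟨f, hP, hR⟩ := seq_rec_choice'
    (fun i q => q.1 ∈ E ∧ 0 < q.1 ∧ q.2 ∈ E ∧ |q.2 / q.1 - Lk (lab i)| < 1)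
    (fun n a b => b.1 < min a.1 ((n:ℝ)+1)⁻¹)
    (let h := hpick (lab 0) 1 one_pos; ⟨h.choose, h.choose_spec.1⟩)
    (fun n a ha =>
      let h := hpick (lab (n+1)) (min a.1 ((n:ℝ)+1)⁻¹) (lt_min ha.2.1 (by positivity))
      ⟨h.choose, h.choose_spec.1, h.choose_spec.2⟩)
  set t : ℕ → ℝ := fun i => (f i).1 with htdef
  set w : ℕ → ℝ := fun i => (f i).2 with hwdef
  have htpos : ∀ i, 0 < t i := fun i => (hP i).2.1
  have htz : Tendsto t atTop (𝓝 0) :=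
    tendsto_zero_of_bound (fun i => (htpos i).le)
      (fun i => ((hR i).trans_le (min_le_right _ _)).le)
  have htE0d : MemE0d E t :=
    ⟨Eventually.of_forall fun i => ((hR i).trans_le (min_le_left _ _)).le,
      fun i => ⟨(hP i).1, (htpos i).ne'⟩, htz⟩
  obtain ⟨a, b, ⟨hgapc, hadec, haz, hratio⟩, c₁, c₂, hc₁, hc₂, hasymp⟩ := hcsp t htE0d
  have hbpos : ∀ i, 0 < b i := fun i =>
    lt_trans (lt_trans (mul_pos hc₁ (htpos i)) (hasymp i).1) (hgapc i).2.1
  have habz : Tendsto (fun i => a i / b i) atTop (𝓝 0) := by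
    have h1 := (tendsto_const_nhds (x := (1:ℝ)) (f := atTop (α := ℕ))).sub hratio
    rw [sub_self] at h1
    refine Tendsto.congr' (Eventually.of_forall fun i => ?_) h1
    rw [sub_div, div_self (hbpos i).ne']
    ring
  obtain ⟨j, hj⟩ := exists_nat_ge (c₂ + 2)
  have hLj : c₂ + 2 ≤ Lk j := le_trans hj (hLkgt j).le
  set η : ℝ := c₁ / (Lk j + 1) with hη
  have hηpos : 0 < η := div_pos hc₁ (by linarith)
  have hfreq : ∃ᶠ i in atTop, η < a i / b i := by
    rw [frequently_atTop]
    intro N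
    refine ⟨Nat.pair j N, Nat.right_le_pair j N, ?_⟩
    have hclose := (hP (Nat.pair j N)).2.2.2
    have hl : lab (Nat.pair j N) = j := by simp [hlab]
    rw [hl] at hclose
    set i := Nat.pair j N with hi
    have htipos : 0 < t i := htpos i
    have hwE2 : w i ∈ E := (hP i).2.2.1
    rw [abs_lt] at hclose
    have hwub : w i < (Lk j + 1) * t i := by
      have h := hclose.2
      have h' : w i / t i < Lk j + 1 := by linarith
      rwa [div_lt_iff₀ htipos] at h'
    have hwlb : (Lk j - 1) * t i < w i := by
      have h := hclose.1
      have h' : Lk j - 1 < w i / t i := by linarith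
      rwa [lt_div_iff₀ htipos] at h'
    have hwgta : a i < w i := by
      have h1 : a i < c₂ * t i := (hasymp i).2
      have : c₂ * t i < (Lk j - 1) * t i := by nlinarith [htpos i]
      linarith
    have hwgeb : b i ≤ w i := by
      by_contra hlt
      push_neg at hlt
      have : w i ∈ Ioo (a i) (b i) ∩ E := ⟨⟨hwgta, hlt⟩, hwE2⟩
      rw [(hgapc i).2.2.1] at this
      exact this
    rw [lt_div_iff₀ (hbpos i)]
    have h1 : η * b i ≤ η * w i := by nlinarith [hwgeb, hηpos]
    have h2 : η * w i < η * ((Lk j + 1) * t i) := by nlinarith [hηpos, hwub]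
    have h3 : η * ((Lk j + 1) * t i) = c₁ * t i := by
      have hL0 : Lk j + 1 ≠ 0 := by nlinarith [hc₂]
      rw [hη]
      field_simp
    have h4 : c₁ * t i < a i := (hasymp i).1
    linarith
  have hev := habz.eventually_lt_const hηpos
  obtain ⟨i, hi1, hi2⟩ := (hfreq.and_eventually hev).exists
  linarith

variable {E : Set ℝ}

lemma gap_pos (hacc : Acc0 E) {a b : ℝ} (h : IsGapComponent E a b) : 0 < a := by
  rcases h.1.lt_or_eq with h0 | h0
  · exact h0
  · exfalso
    obtain ⟨e, heE, hepos, helt⟩ := hacc b (h0 ▸ h.2.1)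
    have : e ∈ Ioo a b ∩ E := ⟨⟨h0 ▸ hepos, helt⟩, heE⟩
    rw [h.2.2.1] at this
    exact this

/-- left endpoints of gap components are approximated from below by `E`. -/
lemma gap_left_approx {a b : ℝ} (h : IsGapComponent E a b) (hapos : 0 < a)
    {ε : ℝ} (hε : 0 < ε) : ∃ e ∈ E, a - ε < e ∧ e ≤ a := by
  by_contra hcon
  push_neg at hcon
  set ε' : ℝ := min ε a with hε'
  have hε'pos : 0 < ε' := lt_min hε hapos
  have hempty : Ioo (a - ε') b ∩ E = ∅ := by
    rw [eq_empty_iff_forall_notMem]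
    rintro x ⟨⟨hx1, hx2⟩, hxE⟩
    rcases le_or_gt x a with hxa | hxa
    · have h1 : a - ε < x := lt_of_le_of_lt (sub_le_sub_left (min_le_left ε a) a) hx1
      exact absurd hxa (not_le.mpr (hcon x hxE h1))
    · have : x ∈ Ioo a b ∩ E := ⟨⟨hxa, hx2⟩, hxE⟩
      rw [h.2.2.1] at this
      exact this
  have := (h.2.2.2 (a - ε') b (by rw [hε']; have := min_le_right ε a; linarith)
    (by linarith) le_rfl hempty).1
  linarith

/-- right endpoints of gap components are approximated from above by `E`. -/
lemma gap_right_approx {a b : ℝ} (h : IsGapComponent E a b)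
    {ε : ℝ} (hε : 0 < ε) : ∃ e ∈ E, b ≤ e ∧ e < b + ε := by
  by_contra hcon
  push_neg at hcon
  have hempty : Ioo a (b + ε) ∩ E = ∅ := by
    rw [eq_empty_iff_forall_notMem]
    rintro x ⟨⟨hx1, hx2⟩, hxE⟩
    rcases lt_or_ge x b with hxb | hxb
    · have : x ∈ Ioo a b ∩ E := ⟨⟨hx1, hxb⟩, hxE⟩
      rw [h.2.2.1] at this
      exact this
    · exact absurd hx2 (not_lt.mpr (hcon x hxE hxb))
  have := (h.2.2.2 a (b + ε) h.1 le_rfl (by linarith) hempty).2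
  linarith

/-- a gap component's left endpoint cannot lie strictly inside another gap component. -/
lemma gap_left_not_inside {a b a' b' : ℝ} (hacc : Acc0 E)
    (h : IsGapComponent E a b) (h' : IsGapComponent E a' b')
    (h1 : a' < a) (h2 : a < b') : False := by
  obtain ⟨e, heE, he1, he2⟩ := gap_left_approx h (gap_pos hacc h) (show 0 < a - a' by linarith)
  have : e ∈ Ioo a' b' ∩ E := ⟨⟨by linarith, lt_of_le_of_lt he2 h2⟩, heE⟩
  rw [h'.2.2.1] at this
  exact this

/-- consecutive structure: if `l (n+1) < l n` then `m (n+1) ≤ l n`. -/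
lemma consecutive_gaps (hacc : Acc0 E) {l m : ℕ → ℝ} (hIE : MemIE E l m)
    {n : ℕ} (hlt : l (n+1) < l n) : m (n+1) ≤ l n := by
  by_contra hcon
  push_neg at hcon
  exact gap_left_not_inside hacc (hIE.1 n) (hIE.1 (n+1)) hlt hcon

lemma freq_drop {l m : ℕ → ℝ} (hacc : Acc0 E) (hIE : MemIE E l m) :
    ∀ N : ℕ, ∃ n, N ≤ n ∧ l (n+1) < l n := by
  intro N
  obtain ⟨N₀, hN₀⟩ := eventually_atTop.mp hIE.2.1
  by_contra hcon
  push_neg at hcon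
  set M₀ : ℕ := max N N₀ with hM₀
  have hconst : ∀ k : ℕ, l (M₀ + k) = l M₀ := by
    intro k
    induction k with
    | zero => rfl
    | succ i ih =>
      have h1 : l (M₀ + i) ≤ l (M₀ + i + 1) := hcon _ (le_trans (le_max_left _ _) (Nat.le_add_right _ _))
      have h2 : l (M₀ + i + 1) ≤ l (M₀ + i) := hN₀ _ (le_trans (le_max_right _ _) (Nat.le_add_right _ _))
      calc l (M₀ + (i+1)) = l (M₀ + i) := le_antisymm h2 h1
        _ = l M₀ := ih
  have hshift : Tendsto (fun k => l (M₀ + k)) atTop (𝓝 0) := by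
    have := (tendsto_add_atTop_iff_nat M₀).mpr hIE.2.2.1
    refine this.congr fun k => ?_
    rw [Nat.add_comm]
  have : Tendsto (fun _ : ℕ => l M₀) atTop (𝓝 0) := hshift.congr hconst
  have h0 : l M₀ = 0 := tendsto_nhds_unique tendsto_const_nhds this
  have := gap_pos hacc (hIE.1 M₀)
  linarith

lemma Mlim_pos (hacc : Acc0 E) {l m : ℕ → ℝ} (hIE : MemIE E l m) : 1 ≤ Mlim l m := by
  apply le_limsup_of_frequently_le (hu_le := Filter.isBoundedUnder_of ⟨⊤, fun _ => le_top⟩)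
  rw [frequently_atTop]
  intro N
  obtain ⟨n, hn1, hn2⟩ := freq_drop hacc hIE N
  refine ⟨n, hn1, ?_⟩
  have h1 : m (n+1) ≤ l n := consecutive_gaps hacc hIE hn2
  have h2 : 0 < m (n+1) := lt_trans (gap_pos hacc (hIE.1 (n+1))) (hIE.1 (n+1)).2.1
  have : (1:ℝ) ≤ l n / m (n+1) := (one_le_div h2).mpr h1
  calc (1:ℝ≥0∞) = ENNReal.ofReal 1 := ENNReal.ofReal_one.symm
    _ ≤ ENNReal.ofReal (l n / m (n+1)) := ENNReal.ofReal_le_ofReal this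

/-- covering of small points of `E` by the blocks of a gap sequence. -/
lemma block_cover (hacc : Acc0 E) {l m : ℕ → ℝ} (hIE : MemIE E l m)
    {N₀ : ℕ} (hN₀ : ∀ n, N₀ ≤ n → l (n+1) ≤ l n) {K : ℕ} (hK : N₀ ≤ K)
    {e : ℝ} (heE : e ∈ E) (hepos : 0 < e) (hele : e ≤ l K) :
    ∃ k, K ≤ k ∧ m (k+1) ≤ e ∧ e ≤ l k := by
  have hstep : ∃ k, K ≤ k ∧ e ≤ l k ∧ l (k+1) < e := by
    by_contra hcon
    push_neg at hcon
    have hall : ∀ j : ℕ, e ≤ l (K + j) := by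
      intro j
      induction j with
      | zero => exact hele
      | succ i ih =>
        exact hcon (K + i) (Nat.le_add_right _ _) ih
    obtain ⟨k₁, hk₁⟩ := eventually_atTop.mp (hIE.2.2.1.eventually_lt_const hepos)
    have := hall k₁
    have h2 := hk₁ (K + k₁) (Nat.le_add_left _ _)
    linarith
  obtain ⟨k, hk1, hk2, hk3⟩ := hstep
  refine ⟨k, hk1, ?_, hk2⟩
  -- e ∉ Ioo (l (k+1)) (m (k+1))
  by_contra hcon
  push_neg at hcon
  have : e ∈ Ioo (l (k+1)) (m (k+1)) ∩ E := ⟨⟨hk3, hcon⟩, heE⟩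
  rw [(hIE.1 (k+1)).2.2.1] at this
  exact this

variable {E : Set ℝ}

lemma rstar_le_Mlim (hE0 : ∀ e ∈ E, 0 ≤ e) (hacc : Acc0 E) {l m : ℕ → ℝ}
    (hIE : MemIE E l m) : RR E ≤ Mlim l m := by
  have hM1 : 1 ≤ Mlim l m := Mlim_pos hacc hIE
  apply sSup_le
  rintro c ⟨L, hL, rfl⟩
  by_contra hgt
  push_neg at hgt
  have hMtop : Mlim l m ≠ ⊤ := ne_top_of_lt (lt_of_lt_of_le hgt le_top)
  have hTL : (Mlim l m).toReal < L := (ENNReal.lt_ofReal_iff_toReal_lt hMtop).mp hgt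
  have h1T : (1:ℝ) ≤ (Mlim l m).toReal := by
    have := ENNReal.toReal_mono hMtop hM1
    simpa using this
  set μ : ℝ := ((Mlim l m).toReal + L) / 2 with hμ
  have hμ1 : 1 < μ := by rw [hμ]; linarith
  have hμL : μ < L := by rw [hμ]; linarith
  have hμM : (Mlim l m).toReal < μ := by rw [hμ]; linarith
  -- eventually the consecutive ratios are < μ
  have hev1 : ∀ᶠ k in atTop, l k < μ * m (k+1) := by
    have h2 : Mlim l m < ENNReal.ofReal μ := by
      rwa [ENNReal.lt_ofReal_iff_toReal_lt hMtop]
    have h3 := eventually_lt_of_limsup_lt h2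
    filter_upwards [h3] with k hk
    have hmpos : 0 < m (k+1) := lt_trans (gap_pos hacc (hIE.1 (k+1))) (hIE.1 (k+1)).2.1
    by_contra hcon
    push_neg at hcon
    have : μ ≤ l k / m (k+1) := (le_div_iff₀ hmpos).mpr (by linarith)
    exact absurd hk (not_lt.mpr (ENNReal.ofReal_le_ofReal this))
  -- eventually blocks are deep: (L+1) * l k < m k
  have hlm0 : Tendsto (fun k => l k / m k) atTop (𝓝 0) := by
    have h1 := (tendsto_const_nhds (x := (1:ℝ)) (f := atTop (α := ℕ))).sub hIE.2.2.2
    rw [sub_self] at h1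
    refine Tendsto.congr' (Eventually.of_forall fun k => ?_) h1
    have hmpos : 0 < m k := lt_trans (gap_pos hacc (hIE.1 k)) (hIE.1 k).2.1
    rw [sub_div, div_self hmpos.ne']
    ring
  have hL1 : 1 < L := lt_of_le_of_lt h1T hTL
  have hev2 : ∀ᶠ k in atTop, (L+1) * l k < m k := by
    have := hlm0.eventually_lt_const (show (0:ℝ) < 1/(L+1) by positivity)
    filter_upwards [this] with k hk
    have hlpos : 0 < l k := gap_pos hacc (hIE.1 k)
    have hmpos : 0 < m k := lt_trans hlpos (hIE.1 k).2.1
    rw [div_lt_iff₀ hmpos] at hk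
    have hL1' : (0:ℝ) < L + 1 := by linarith
    have h9 : (L+1) * l k < (L+1) * (1/(L+1) * m k) := by nlinarith
    have h10 : (L+1) * (1/(L+1) * m k) = m k := by field_simp
    linarith
  obtain ⟨N₀, hN₀⟩ := eventually_atTop.mp hIE.2.1
  obtain ⟨K₀, hK₀⟩ := eventually_atTop.mp hev1
  obtain ⟨K₁, hK₁⟩ := eventually_atTop.mp hev2
  set K : ℕ := max (max K₀ K₁) N₀ with hK
  have hlKpos : 0 < l K := gap_pos hacc (hIE.1 K)
  -- unpack the achievable limit
  obtain ⟨τ, s, hτ, hdec, hz, hs, hlim⟩ := hL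
  have hev3 : ∀ᶠ n in atTop, τ n ≤ l K := by
    filter_upwards [hz.eventually_lt_const hlKpos] with n hn
    exact hn.le
  have hev4 : ∀ᶠ n in atTop, μ < s n / τ n := hlim.eventually_const_lt hμL
  have hev5 : ∀ᶠ n in atTop, s n / τ n < L + 1 := hlim.eventually_lt_const (by linarith)
  obtain ⟨n, h3, h4, h5⟩ := (hev3.and (hev4.and hev5)).exists
  obtain ⟨k, hk1, hk2, hk3⟩ := block_cover hacc hIE hN₀ (le_max_right _ _)
    (hτ n).1 (hτ n).2 h3
  have hmk1pos : 0 < m (k+1) := lt_trans (gap_pos hacc (hIE.1 (k+1))) (hIE.1 (k+1)).2.1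
  rcases le_or_gt (s n) (l k) with hcase | hcase
  · -- within the block: ratio bounded by μ
    have : s n / τ n ≤ l k / m (k+1) :=
      div_le_div₀ (gap_pos hacc (hIE.1 k)).le hcase hmk1pos hk2
    have h6 : l k < μ * m (k+1) := hK₀ k (le_trans (le_trans (le_max_left _ _) (le_max_left _ _)) hk1)
    have h7 : l k / m (k+1) < μ := (div_lt_iff₀ hmk1pos).mpr (by linarith)
    linarith
  · -- beyond the block: jump over the gap
    have hsm : m k ≤ s n := by
      by_contra hcon
      push_neg at hcon
      have : s n ∈ Ioo (l k) (m k) ∩ E := ⟨⟨hcase, hcon⟩, hs n⟩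
      rw [(hIE.1 k).2.2.1] at this
      exact this
    have h6 : (L+1) * l k < m k := hK₁ k (le_trans (le_trans (le_max_right _ _) (le_max_left _ _)) hk1)
    have h7 : (L+1) * τ n ≤ (L+1) * l k := by nlinarith [hk3]
    have h8 : (L+1) * τ n < s n := by linarith
    rw [div_lt_iff₀ (hτ n).2] at h5
    linarith

variable {E : Set ℝ}

lemma Mlim_le_rstar (hE0 : ∀ e ∈ E, 0 ≤ e) (hacc : Acc0 E) (hfin : RR E ≠ ⊤)
    {l m : ℕ → ℝ} (huniv : IsUniversal E l m) : Mlim l m ≤ RR E := by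
  by_contra hgt
  push_neg at hgt
  obtain ⟨hIE, huni⟩ := huniv
  obtain ⟨c, hc1, hc2⟩ := exists_between hgt
  have hctop : c ≠ ⊤ := (lt_of_lt_of_le hc2 le_top).ne
  set ρ : ℝ := (RR E).toReal with hρdef
  set r : ℝ := c.toReal with hrdef
  have hρr : ρ < r := by
    rw [hρdef, hrdef]
    exact (ENNReal.toReal_lt_toReal hfin hctop).mpr hc1
  have hρ1 : 1 ≤ ρ := by
    have h := one_le_RR hacc
    rw [hρdef]
    have := ENNReal.toReal_mono hfin h
    simpa using this
  have hr1 : 1 < r := lt_of_le_of_lt hρ1 hρr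
  -- frequently the consecutive ratio exceeds r
  have hfreq : ∃ᶠ k in atTop, r < l k / m (k+1) := by
    have h1 : ∃ᶠ k in atTop, c < ENNReal.ofReal (l k / m (k+1)) :=
      frequently_lt_of_lt_limsup (hu := ⟨⊥, fun a _ => bot_le⟩) hc2
    refine h1.mono fun k hk => ?_
    by_contra hcon
    push_neg at hcon
    have : ENNReal.ofReal (l k / m (k+1)) ≤ ENNReal.ofReal r := ENNReal.ofReal_le_ofReal hcon
    rw [hrdef, ENNReal.ofReal_toReal hctop] at this
    exact absurd hk (not_lt.mpr this)
  obtain ⟨N₀, hN₀⟩ := eventually_atTop.mp hIE.2.1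
  have hlmono : ∀ j k : ℕ, N₀ ≤ j → j ≤ k → l k ≤ l j := by
    intro j k hj hjk
    induction k, hjk using Nat.le_induction with
    | base => exact le_rfl
    | succ k hk ih => exact le_trans (hN₀ k (le_trans hj hk)) ih
  obtain ⟨φ, hφmono, hφ⟩ := extraction_of_frequently_atTop
    (hfreq.and_eventually (eventually_ge_atTop N₀))
  have hφr : ∀ i, r < l (φ i) / m (φ i + 1) := fun i => (hφ i).1
  have hφN₀ : ∀ i, N₀ ≤ φ i := fun i => (hφ i).2
  have hmpos : ∀ k, 0 < m k := fun k => lt_trans (gap_pos hacc (hIE.1 k)) (hIE.1 k).2.1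
  have hlpos : ∀ k, 0 < l k := fun k => gap_pos hacc (hIE.1 k)
  have hrm : ∀ i, r * m (φ i + 1) < l (φ i) := by
    intro i
    have := hφr i
    rwa [lt_div_iff₀ (hmpos _)] at this
  -- choose C₀ between ρ and r
  set C₀ : ℝ := (ρ + r) / 2 with hC₀def
  have hC₀ρ : ρ < C₀ := by rw [hC₀def]; linarith
  have hC₀r : C₀ < r := by rw [hC₀def]; linarith
  have hC₀1 : 1 < C₀ := lt_of_le_of_lt hρ1 hC₀ρ
  have hC₀0 : 0 < C₀ := lt_trans one_pos hC₀1
  -- choose E-points just above m (φ i + 1)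
  have hpick : ∀ i : ℕ, ∃ e ∈ E, m (φ i + 1) ≤ e ∧ e < m (φ i + 1) + (r - C₀)/(2*C₀) * m (φ i + 1) := by
    intro i
    exact gap_right_approx (hIE.1 (φ i + 1))
      (mul_pos (div_pos (by linarith) (by linarith)) (hmpos (φ i + 1)))
  choose e heE hel heu using hpick
  have hepos : ∀ i, 0 < e i := fun i => lt_of_lt_of_le (hmpos _) (hel i)
  have hkey1 : ∀ i, C₀ * e i < l (φ i) := by
    intro i
    have h1 := heu i
    have h2 := hrm i
    have h3 := hmpos (φ i + 1)
    have h4 : C₀ * e i < C₀ * m (φ i + 1) + C₀ * ((r - C₀)/(2*C₀) * m (φ i + 1)) := by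
      nlinarith
    have h5 : C₀ * ((r - C₀)/(2*C₀) * m (φ i + 1)) = (r - C₀)/2 * m (φ i + 1) := by
      field_simp
    nlinarith
  have hmlel : ∀ i, m (φ i + 1) < l (φ i) := fun i =>
    lt_of_le_of_lt (le_mul_of_one_le_left (hmpos _).le hr1.le) (hrm i)
  have hez : Tendsto e atTop (𝓝 0) := by
    have hlz : Tendsto (fun i => l (φ i)) atTop (𝓝 0) := hIE.2.2.1.comp hφmono.tendsto_atTop
    apply squeeze_zero' (Eventually.of_forall fun i => (hepos i).le)
      (g := fun i => l (φ i))
    · filter_upwards with i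
      have h1 := heu i
      have h2 := hkey1 i
      have h3 := hepos i
      nlinarith
    · exact hlz
  obtain ⟨e₀, he₀E, he₀pos, _⟩ := hacc 1 one_pos
  obtain ⟨p, q, hpdef, hpe, hgap, hkey, hqmin⟩ := gap_build hE0 hfin hC₀ρ hC₀1
    (fun i => ⟨heE i, hepos i⟩) hez he₀E he₀pos
  -- p is strictly decreasing
  have hpdec : ∀ i, p (i+1) < p i := by
    intro i
    have h1 : p (i+1) ≤ C₀ * e (i+1) := (hpe (i+1)).2
    have h2 : C₀ * e (i+1) < l (φ (i+1)) := hkey1 (i+1)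
    have h3 : l (φ (i+1)) ≤ l (φ i + 1) :=
      hlmono (φ i + 1) (φ (i+1)) (le_trans (hφN₀ i) (Nat.le_succ _))
        (Nat.succ_le_of_lt (hφmono (Nat.lt_succ_self i)))
    have h4 : l (φ i + 1) < m (φ i + 1) := (hIE.1 (φ i + 1)).2.1
    have h5 : m (φ i + 1) ≤ e i := hel i
    have h6 : e i ≤ p i := (hpe i).1
    linarith
  -- p avoids all the l k
  have hminH : ∃ h₀ : ℝ, 0 < h₀ ∧ ∀ k, k ≤ N₀ → h₀ ≤ l k := by
    have hne : ((Finset.range (N₀+1)).image l).Nonempty :=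
      Finset.Nonempty.image ⟨0, Finset.mem_range.mpr (Nat.succ_pos N₀)⟩ l
    refine ⟨((Finset.range (N₀+1)).image l).min' hne, ?_, ?_⟩
    · obtain ⟨k, _, hval⟩ := Finset.mem_image.mp (Finset.min'_mem _ hne)
      rw [← hval]
      exact hlpos k
    · intro k hk
      exact Finset.min'_le _ _ (Finset.mem_image_of_mem l (Finset.mem_range.mpr (by omega)))
  obtain ⟨h₀, hh₀pos, hh₀⟩ := hminH
  have havoid : ∀ᶠ i in atTop, ∀ k, p i ≠ l k := by
    have hsmall : ∀ᶠ i in atTop, C₀ * e i < h₀ := by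
      have h := hez.const_mul C₀
      rw [mul_zero] at h
      exact h.eventually_lt_const hh₀pos
    filter_upwards [hsmall] with i hi k
    rcases lt_or_ge k N₀ with hk | hk
    · have h1 : p i ≤ C₀ * e i := (hpe i).2
      have h2 : h₀ ≤ l k := hh₀ k hk.le
      linarith
    · rcases le_or_gt k (φ i) with hk2 | hk2
      · have h1 : l (φ i) ≤ l k := hlmono k (φ i) hk hk2
        have h2 : p i ≤ C₀ * e i := (hpe i).2
        have h3 := hkey1 i
        linarith
      · have h1 : l k ≤ l (φ i + 1) := hlmono (φ i + 1) k (le_trans (hφN₀ i) (Nat.le_succ _)) hk2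
        have h2 : l (φ i + 1) < m (φ i + 1) := (hIE.1 (φ i + 1)).2.1
        have h3 : m (φ i + 1) ≤ e i := hel i
        have h4 : e i ≤ p i := (hpe i).1
        linarith
  obtain ⟨I₁, hI₁⟩ := eventually_atTop.mp hgap
  obtain ⟨I₂, hI₂⟩ := eventually_atTop.mp havoid
  set I : ℕ := max I₁ I₂ with hIdef
  set A : ℕ → ℝ := fun i => p (max i I) with hA
  set B : ℕ → ℝ := fun i => q (max i I) with hB
  have hmaxt : Tendsto (fun n => max n I) atTop atTop :=
    tendsto_atTop_mono (fun n => le_max_left n I) tendsto_id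
  have hMem : MemIE E A B := by
    refine ⟨?_, ?_, ?_, ?_⟩
    · intro i
      exact hI₁ _ (le_trans (le_max_left _ _) (le_max_right i I))
    · rw [AlmostDecreasing]
      filter_upwards [eventually_ge_atTop I] with i hi
      have h1 : max (i+1) I = i+1 := max_eq_left (by omega)
      have h2 : max i I = i := max_eq_left hi
      rw [hA]
      simp only [h1, h2]
      exact (hpdec i).le
    · apply squeeze_zero' (f := A) (g := fun i => C₀ * e (max i I))
      · exact Eventually.of_forall fun i => (hepos _).le.trans (hpe _).1
      · exact Eventually.of_forall fun i => (hpe _).2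
      · have := (hez.comp hmaxt).const_mul C₀
        simpa using this
    · apply ratio_tendsto hC₀1 (e := fun i => e (max i I))
      · exact Eventually.of_forall fun i => hepos _
      · exact Eventually.of_forall fun i => (hpe _).2
      · exact Eventually.of_forall fun i => (hepos _).le.trans (hpe _).1
      · intro j
        obtain ⟨M, hM⟩ := eventually_atTop.mp (hkey j)
        filter_upwards [eventually_ge_atTop M] with i hi
        exact hM _ (le_trans hi (le_max_left i I))
  obtain ⟨N₁, f, hUf⟩ := huni A B hMem
  set n₀ : ℕ := max N₁ I with hn₀
  have h1 : A n₀ = l (f n₀) := hUf n₀ (le_max_left _ _)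
  have h2 : max n₀ I = n₀ := max_eq_left (le_max_right _ _)
  rw [hA] at h1
  simp only [h2] at h1
  exact absurd h1 (hI₂ n₀ (le_trans (le_max_right I₁ I₂) (le_max_right N₁ I)) (f n₀))

end S15

/-- Theorem 4.4.5. -/
theorem stmt15 {X : Type*} [MetricSpace X] (p : X)
    (hp : p ∈ closure ({p}ᶜ : Set X)) :
    ((RstarX p < ⊤ ↔ 0 < RlowX p) ∧
      (RstarX p < ⊤ ↔ CSP {t : ℝ | ∃ x : X, dist x p = t})) ∧
      (RstarX p < ⊤ →
        ∀ l m : ℕ → ℝ, IsUniversal {t : ℝ | ∃ x : X, dist x p = t} l m →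
          RstarX p = Mlim l m ∧ RlowX p = 1 / Mlim l m) := by
  have hE0 := S15.Ep_nonneg p
  have hacc := S15.Ep_acc hp
  have hrs : RstarX p = S15.RR (S15.Ep p) := S15.rstarX_eq p
  have hrl : RlowX p = S15.Rl (S15.Ep p) := S15.rlowX_eq p
  have hinv : S15.Rl (S15.Ep p) = (S15.RR (S15.Ep p))⁻¹ := S15.Rl_eq_inv hacc
  refine ⟨⟨?_, ?_⟩, ?_⟩
  · rw [hrs, hrl, hinv]
    constructor
    · intro h
      exact ENNReal.inv_pos.mpr h.ne
    · intro h
      exact lt_top_iff_ne_top.mpr (ENNReal.inv_pos.mp h)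
  · rw [hrs]
    constructor
    · intro h
      exact S15.csp_of_fin hE0 hacc h.ne
    · intro h
      exact lt_top_iff_ne_top.mpr (S15.fin_of_csp hE0 h)
  · intro hfin l m huniv
    have hfin' : S15.RR (S15.Ep p) ≠ ⊤ := by rw [← hrs]; exact hfin.ne
    have h1 : S15.RR (S15.Ep p) ≤ Mlim l m := S15.rstar_le_Mlim hE0 hacc huniv.1
    have h2 : Mlim l m ≤ S15.RR (S15.Ep p) := S15.Mlim_le_rstar hE0 hacc hfin' huniv
    have heq2 : S15.RR (S15.Ep p) = Mlim l m := le_antisymm h1 h2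
    refine ⟨by rw [hrs]; exact heq2, ?_⟩
    rw [hrl, hinv, heq2, one_div]
end

section
/- Let E ⊆ [0,∞) be strongly porous at 0 with 0 an accumulation point of E. Then E is completely strongly porous at 0 if and only if there is a universal L̃ ∈ Ĩ_Eᵈ with M(L̃) < ∞. -/
open Filter Topology Set
open scoped ENNReal

/-- `λ(E,0,h)`: the length of the largest open subinterval of `(0,h)` missing `E`. -/
noncomputable def lambdaGap (E : Set ℝ) (h : ℝ) : ℝ :=
  sSup {l : ℝ | ∃ a b : ℝ, 0 ≤ a ∧ a < b ∧ b ≤ h ∧ Ioo a b ∩ E = ∅ ∧ l = b - a}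

/-- `E` is strongly porous at `0`: `p⁺(E,0) = limsup_{h→0⁺} λ(E,0,h)/h = 1`. -/
def StronglyPorousAtZero (E : Set ℝ) : Prop :=
  limsup (fun h => lambdaGap E h / h) (𝓝[>] (0 : ℝ)) = 1

section Aux

variable {E : Set ℝ}

/-- E-points arbitrarily close to 0. -/
lemma acc_near (hE : E ⊆ Ici 0) (hacc : (0:ℝ) ∈ closure (E \ {0})) :
    ∀ ε : ℝ, 0 < ε → ∃ e ∈ E, 0 < e ∧ e < ε := by
  intro ε hε
  rcases Metric.mem_closure_iff.1 hacc ε hε with ⟨e, he, hd⟩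
  refine ⟨e, he.1, ?_, ?_⟩
  · rcases lt_or_eq_of_le (show (0:ℝ) ≤ e from hE he.1) with h | h
    · exact h
    · exact absurd h.symm he.2
  · have habs : |e| < ε := by
      have := hd
      rw [Real.dist_eq] at this
      simpa using this.trans_le (le_refl ε) |> fun h => by simpa [abs_sub_comm] using h
    exact lt_of_le_of_lt (le_abs_self e) habs

lemma gap_notmem (h : IsGapComponent E a b) {x : ℝ} (hx : x ∈ E) : x ∉ Ioo a b := by
  intro hmem
  have := h.2.2.1
  have : x ∈ Ioo a b ∩ E := ⟨hmem, hx⟩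
  simp [h.2.2.1] at this

/-- G1 : left endpoints are positive. -/
lemma gap_pos (hE : E ⊆ Ici 0) (hacc : (0:ℝ) ∈ closure (E \ {0}))
    (h : IsGapComponent E a b) : 0 < a := by
  rcases lt_or_eq_of_le h.1 with h' | h'
  · exact h'
  · exfalso
    have hb : (0:ℝ) < b := by rw [h']; exact h.2.1
    rcases acc_near hE hacc b hb with ⟨e, heE, hepos, heb⟩
    exact gap_notmem h heE ⟨by rw [← h']; exact hepos, heb⟩

/-- G2 : E-points above a are ≥ b. -/
lemma gap_right_le (h : IsGapComponent E a b) {e : ℝ} (he : e ∈ E) (hae : a < e) :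
    b ≤ e := by
  by_contra hc
  exact gap_notmem h he ⟨hae, lt_of_not_ge hc⟩

/-- G3 : E-points just below (or at) the left endpoint. -/
lemma gap_left_mem (h : IsGapComponent E a b) {c : ℝ} (hc0 : 0 ≤ c) (hca : c < a) :
    ∃ x ∈ E, c < x ∧ x ≤ a := by
  by_contra hc
  push_neg at hc
  have hempty : Ioo c b ∩ E = ∅ := by
    ext x
    simp only [mem_inter_iff, mem_Ioo, mem_empty_iff_false, iff_false, not_and]
    rintro ⟨hcx, hxb⟩ hxE
    rcases le_or_gt x a with hxa | hxa
    · exact absurd hxa (not_le.2 (hc x hxE hcx))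
    · exact gap_notmem h hxE ⟨hxa, hxb⟩
  exact absurd ((h.2.2.2 c b hc0 hca.le (le_refl b) hempty).1) (ne_of_lt hca)

/-- G4 : overlapping components are equal. -/
lemma gap_eq_of_overlap (h : IsGapComponent E a b) (h' : IsGapComponent E a' b')
    {x : ℝ} (hx : x ∈ Ioo a b) (hx' : x ∈ Ioo a' b') : a = a' ∧ b = b' := by
  have hmiss : Ioo (min a a') (max b b') ∩ E = ∅ := by
    ext y
    simp only [mem_inter_iff, mem_Ioo, mem_empty_iff_false, iff_false, not_and]
    rintro ⟨h1, h2⟩ hyE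
    have n1 := gap_notmem h hyE
    have n2 := gap_notmem h' hyE
    simp only [mem_Ioo, not_and, not_lt] at n1 n2
    rcases le_or_gt y a with ha | ha
    · rcases le_or_gt y a' with ha' | ha'
      · exact absurd h1 (not_lt.2 (le_min ha ha'))
      · have : b' ≤ y := n2 ha'
        exact absurd (lt_of_le_of_lt (this.trans ha) hx.1) (not_lt.2 hx'.2.le)
    · have hb : b ≤ y := n1 ha
      rcases le_or_gt y a' with ha' | ha'
      · exact absurd (lt_of_le_of_lt (hb.trans ha') hx'.1) (not_lt.2 hx.2.le)
      · have hb' : b' ≤ y := n2 ha'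
        exact absurd h2 (not_lt.2 (max_le hb hb'))
  have e1 := h.2.2.2 (min a a') (max b b') (le_min h.1 h'.1) (min_le_left _ _)
      (le_max_left _ _) hmiss
  have e2 := h'.2.2.2 (min a a') (max b b') (le_min h.1 h'.1) (min_le_right _ _)
      (le_max_right _ _) hmiss
  exact ⟨e1.1.symm.trans e2.1, e1.2.symm.trans e2.2⟩

/-- G4' : components with the same left endpoint are equal. -/
lemma gap_eq_left (h : IsGapComponent E a b) (h' : IsGapComponent E a b') : b = b' := by
  have hx : (a + min b b')/2 ∈ Ioo a b := by
    constructor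
    · have : a < min b b' := lt_min h.2.1 h'.2.1
      linarith
    · have h1 : min b b' ≤ b := min_le_left _ _
      have : a < min b b' := lt_min h.2.1 h'.2.1
      linarith
  have hx' : (a + min b b')/2 ∈ Ioo a b' := by
    have h1 : min b b' ≤ b' := min_le_right _ _
    have : a < min b b' := lt_min h.2.1 h'.2.1
    exact ⟨by linarith, by linarith⟩
  exact (gap_eq_of_overlap h h' hx hx').2

/-- G5 : separation of components. -/
lemma gap_sep (h : IsGapComponent E a b) (h' : IsGapComponent E a' b')
    (haa : a < a') : b ≤ a' := by
  by_contra hc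
  push_neg at hc
  have hx : (a' + min b b')/2 ∈ Ioo a b := by
    have h1 : a' < min b b' := lt_min hc h'.2.1
    have h2 : min b b' ≤ b := min_le_left _ _
    exact ⟨by linarith, by linarith⟩
  have hx' : (a' + min b b')/2 ∈ Ioo a' b' := by
    have h1 : a' < min b b' := lt_min hc h'.2.1
    have h2 : min b b' ≤ b' := min_le_right _ _
    exact ⟨by linarith, by linarith⟩
  exact absurd (gap_eq_of_overlap h h' hx hx').1 (ne_of_lt haa)

/-- G6 : extending a gap interval to a component. -/
lemma gap_extend (hE : E ⊆ Ici 0) {α β e : ℝ} (h0 : 0 ≤ α) (hαβ : α < β)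
    (hmiss : Ioo α β ∩ E = ∅) (he : e ∈ E) (hβe : β ≤ e) :
    ∃ A B, IsGapComponent E A B ∧ A ≤ α ∧ β ≤ B ∧ B ≤ e := by
  set S₁ : Set ℝ := insert 0 (E ∩ Iic α) with hS₁
  set S₂ : Set ℝ := E ∩ Ici β with hS₂
  have hS₁ne : S₁.Nonempty := ⟨0, mem_insert _ _⟩
  have hS₁bdd : BddAbove S₁ := by
    refine ⟨α, ?_⟩
    rintro x (rfl | ⟨_, hx⟩)
    · exact h0
    · exact hx
  have hS₂ne : S₂.Nonempty := ⟨e, he, hβe⟩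
  have hS₂bdd : BddBelow S₂ := ⟨β, fun x hx => hx.2⟩
  set A := sSup S₁ with hA
  set B := sInf S₂ with hB
  have hA0 : 0 ≤ A := le_csSup hS₁bdd (mem_insert _ _)
  have hAα : A ≤ α := csSup_le hS₁ne (by rintro x (rfl | ⟨_, hx⟩); exacts [h0, hx])
  have hβB : β ≤ B := le_csInf hS₂ne fun x hx => hx.2
  have hBe : B ≤ e := csInf_le hS₂bdd ⟨he, hβe⟩
  have hmiss' : Ioo A B ∩ E = ∅ := by
    ext y
    simp only [mem_inter_iff, mem_Ioo, mem_empty_iff_false, iff_false, not_and]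
    rintro ⟨h1, h2⟩ hyE
    rcases le_or_gt y α with hy | hy
    · exact absurd (le_csSup hS₁bdd (mem_insert_of_mem _ ⟨hyE, hy⟩)) (not_le.2 h1)
    · rcases lt_or_ge y β with hy' | hy'
      · have : y ∈ Ioo α β ∩ E := ⟨⟨hy, hy'⟩, hyE⟩
        simp [hmiss] at this
      · exact absurd (csInf_le hS₂bdd ⟨hyE, hy'⟩) (not_le.2 h2)
  refine ⟨A, B, ⟨hA0, lt_of_le_of_lt hAα (lt_of_lt_of_le hαβ hβB), hmiss', ?_⟩, hAα, hβB, hBe⟩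
  intro a' b' ha'0 ha'A hBb' hmiss''
  constructor
  · by_contra hne
    have hlt : a' < A := lt_of_le_of_ne ha'A hne
    rcases exists_lt_of_lt_csSup hS₁ne hlt with ⟨s, hs, has⟩
    rcases hs with rfl | ⟨hsE, hsα⟩
    · exact absurd has (not_lt.2 ha'0)
    · have hsb' : s < b' := by
        have h1 : β ≤ b' := hβB.trans hBb'
        have h2 : s ≤ α := hsα
        linarith
      have : s ∈ Ioo a' b' ∩ E := ⟨⟨has, hsb'⟩, hsE⟩
      simp [hmiss''] at this
  · by_contra hne
    have hlt : B < b' := lt_of_le_of_ne hBb' (fun h => hne h.symm)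
    rcases exists_lt_of_csInf_lt hS₂ne hlt with ⟨s, ⟨hsE, hsβ⟩, hsb⟩
    have : s ∈ Ioo a' b' ∩ E :=
      ⟨⟨lt_of_le_of_lt (ha'A.trans hAα) (lt_of_lt_of_le hαβ hsβ), hsb⟩, hsE⟩
    simp [hmiss''] at this


variable {E : Set ℝ} {a b τ : ℕ → ℝ}

lemma almostDecreasing_tail_mono (h : AlmostDecreasing l) :
    ∃ N : ℕ, ∀ i j : ℕ, N ≤ i → i ≤ j → l j ≤ l i := by
  rcases eventually_atTop.1 h with ⟨N, hN⟩
  refine ⟨N, fun i j hNi hij => ?_⟩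
  induction j, hij using Nat.le_induction with
  | base => exact le_refl _
  | succ k hk ih => exact (hN k (hNi.trans hk)).trans ih

lemma memIE_pos (hE : E ⊆ Ici 0) (hacc : (0:ℝ) ∈ closure (E \ {0}))
    (h : MemIE E a b) : ∀ n, 0 < a n ∧ a n < b n :=
  fun n => ⟨gap_pos hE hacc (h.1 n), (h.1 n).2.1⟩

lemma ratio_eq (x y : ℝ) (hy : y ≠ 0) : (y - x)/y = 1 - x/y := by field_simp

lemma memIE_div_tendsto (hpos : ∀ n, 0 < a n ∧ a n < b n)
    (h : Tendsto (fun n => (b n - a n) / b n) atTop (𝓝 1)) :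
    Tendsto (fun n => a n / b n) atTop (𝓝 0) := by
  have heq : (fun n => a n / b n) = fun n => 1 - (b n - a n) / b n := by
    funext n
    have hb : b n ≠ 0 := ne_of_gt ((hpos n).1.trans (hpos n).2)
    field_simp
    ring
  rw [heq]
  have : Tendsto (fun n => (1:ℝ) - (b n - a n) / b n) atTop (𝓝 (1 - 1)) :=
    tendsto_const_nhds.sub h
  simpa using this

lemma div_tendsto_ratio (hpos : ∀ n, 0 < a n ∧ a n < b n)
    (h : Tendsto (fun n => a n / b n) atTop (𝓝 0)) :
    Tendsto (fun n => (b n - a n) / b n) atTop (𝓝 1) := by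
  have heq : (fun n => (b n - a n) / b n) = fun n => 1 - a n / b n := by
    funext n
    exact ratio_eq _ _ (ne_of_gt ((hpos n).1.trans (hpos n).2))
  rw [heq]
  simpa using tendsto_const_nhds.sub h

lemma memIE_eventually_mul_lt (hE : E ⊆ Ici 0) (hacc : (0:ℝ) ∈ closure (E \ {0}))
    (h : MemIE E a b) (K : ℝ) : ∀ᶠ n in atTop, K * a n < b n := by
  have hpos := memIE_pos hE hacc h
  have hdiv := memIE_div_tendsto hpos h.2.2.2
  rcases le_or_gt K 0 with hK | hK
  · exact Eventually.of_forall fun n =>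
      lt_of_le_of_lt (mul_nonpos_of_nonpos_of_nonneg hK (hpos n).1.le)
        ((hpos n).1.trans (hpos n).2)
  · have hev : ∀ᶠ n in atTop, a n / b n < 1 / K :=
      hdiv.eventually (eventually_lt_nhds (by positivity))
    filter_upwards [hev] with n hn
    have hb : 0 < b n := (hpos n).1.trans (hpos n).2
    rw [div_lt_div_iff₀ hb hK] at hn
    linarith [hn]

lemma memIE_b_tendsto (hE : E ⊆ Ici 0) (hacc : (0:ℝ) ∈ closure (E \ {0}))
    (h : MemIE E a b) : Tendsto b atTop (𝓝 0) := by
  have hpos := memIE_pos hE hacc h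
  rw [Metric.tendsto_atTop]
  intro ε hε
  rcases acc_near hE hacc ε hε with ⟨e, heE, hepos, heε⟩
  rcases eventually_atTop.1 (h.2.2.1.eventually (eventually_lt_nhds hepos)) with ⟨N, hN⟩
  refine ⟨N, fun n hn => ?_⟩
  have hb : b n ≤ e := gap_right_le (h.1 n) heE (hN n hn)
  have : 0 < b n := (hpos n).1.trans (hpos n).2
  rw [Real.dist_eq]
  rw [abs_sub_comm, abs_of_nonpos (by linarith)]
  linarith [hb.trans_lt heε]

lemma exists_pos_forall_lt (N : ℕ) (g : ℕ → ℝ) (hg : ∀ n < N, 0 < g n) :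
    ∃ c : ℝ, 0 < c ∧ ∀ n < N, c < g n := by
  induction N with
  | zero => exact ⟨1, one_pos, fun n hn => absurd hn (Nat.not_lt_zero n)⟩
  | succ k ih =>
    rcases ih (fun n hn => hg n (hn.trans (Nat.lt_succ_self k))) with ⟨c, hc, hcg⟩
    have hgk : 0 < g k := hg k (Nat.lt_succ_self k)
    refine ⟨min c (g k) / 2, by positivity, fun n hn => ?_⟩
    rcases Nat.lt_succ_iff_lt_or_eq.1 hn with hn' | rfl
    · have : min c (g k) ≤ c := min_le_left _ _
      have := hcg n hn'
      linarith
    · have : min c (g n) ≤ g n := min_le_right _ _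
      linarith

lemma patch_tau (hτ : ∀ n, 0 < τ n) (N : ℕ)
    (hgap : ∀ n, IsGapComponent E (a n) (b n)) (hdec : AlmostDecreasing a)
    (h0 : Tendsto a atTop (𝓝 0))
    (hr : Tendsto (fun n => (b n - a n) / b n) atTop (𝓝 1))
    (hpos : ∀ n, 0 < a n)
    {c₁ c₂ : ℝ} (hc₁ : 0 < c₁) (hc₂ : 0 < c₂)
    (hbound : ∀ n, N ≤ n → c₁ * τ n < a n ∧ a n < c₂ * τ n) :
    TauStronglyPorous E τ := by
  set a' : ℕ → ℝ := fun n => a (max n N) with ha'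
  set b' : ℕ → ℝ := fun n => b (max n N) with hb'
  have hEq : ∀ᶠ n in atTop, a' n = a n ∧ b' n = b n := by
    filter_upwards [eventually_ge_atTop N] with n hn
    simp [ha', hb', max_eq_left hn]
  refine ⟨a', b', ⟨fun n => hgap _, ?_, ?_, ?_⟩, ?_⟩
  · rcases eventually_atTop.1 hdec with ⟨Nd, hNd⟩
    filter_upwards [eventually_ge_atTop (max N Nd)] with n hn
    have h1 : max (n+1) N = n+1 := max_eq_left ((le_max_left N Nd).trans hn |>.trans (Nat.le_succ n))
    have h2 : max n N = n := max_eq_left ((le_max_left N Nd).trans hn)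
    rw [ha']
    simp only [h1, h2]
    exact hNd n ((le_max_right N Nd).trans hn)
  · apply h0.congr'
    filter_upwards [hEq] with n hn
    exact hn.1.symm
  · apply hr.congr'
    filter_upwards [hEq] with n hn
    rw [hn.1, hn.2]
  · -- Asymp
    rcases exists_pos_forall_lt N (fun n => a N / τ n)
      (fun n _ => div_pos (hpos N) (hτ n)) with ⟨cl, hcl, hcl'⟩
    rcases exists_pos_forall_lt N (fun n => τ n / a N)
      (fun n _ => div_pos (hτ n) (hpos N)) with ⟨cu, hcu, hcu'⟩
    refine ⟨min c₁ cl, max c₂ (1/cu), lt_min hc₁ hcl, lt_max_of_lt_left hc₂, fun n => ?_⟩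
    rcases le_or_gt N n with hn | hn
    · have h2 : max n N = n := max_eq_left hn
      have hb := hbound n hn
      constructor
      · calc min c₁ cl * τ n ≤ c₁ * τ n := by
              apply mul_le_mul_of_nonneg_right (min_le_left _ _) (hτ n).le
        _ < a' n := by rw [ha']; simp only [h2]; exact hb.1
      · calc a' n = a n := by rw [ha']; simp only [h2]
        _ < c₂ * τ n := hb.2
        _ ≤ max c₂ (1/cu) * τ n := by
              apply mul_le_mul_of_nonneg_right (le_max_left _ _) (hτ n).le
    · have h2 : max n N = N := max_eq_right hn.le
      have ha'n : a' n = a N := by rw [ha']; simp only [h2]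
      constructor
      · have := hcl' n hn
        rw [lt_div_iff₀ (hτ n)] at this
        calc min c₁ cl * τ n ≤ cl * τ n :=
              mul_le_mul_of_nonneg_right (min_le_right _ _) (hτ n).le
        _ < a N := by linarith
        _ = a' n := ha'n.symm
      · have := hcu' n hn
        rw [lt_div_iff₀ (hpos N)] at this
        have h1cu : a N < (1/cu) * τ n := by
          rw [div_mul_eq_mul_div, lt_div_iff₀ hcu]
          linarith
        calc a' n = a N := ha'n
        _ < (1/cu) * τ n := h1cu
        _ ≤ max c₂ (1/cu) * τ n :=
              mul_le_mul_of_nonneg_right (le_max_right _ _) (hτ n).le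


section Rec

/-- generic recursion with choice -/
lemma exists_seq_rec {α : Type*} (P : α → Prop) (R : ℕ → α → α → Prop) (x0 : α) (h0 : P x0)
    (step : ∀ n x, P x → ∃ y, P y ∧ R n x y) :
    ∃ f : ℕ → α, f 0 = x0 ∧ (∀ n, P (f n)) ∧ ∀ n, R n (f n) (f (n+1)) := by
  choose g hg1 hg2 using step
  let F : ℕ → {x : α // P x} := fun n =>
    Nat.rec ⟨x0, h0⟩ (fun n p => ⟨g n p.1 p.2, hg1 n p.1 p.2⟩) n
  exact ⟨fun n => (F n).1, rfl, fun n => (F n).2, fun n => hg2 n (F n).1 (F n).2⟩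

/-- decay helper : if t k < 1/k for k ≥ 1 and t k > 0, then t → 0 -/
lemma tendsto_zero_of_lt_one_div {t : ℕ → ℝ} (hpos : ∀ n, 0 < t n)
    (hlt : ∀ k, 1 ≤ k → t k < 1 / (k : ℝ)) : Tendsto t atTop (𝓝 0) := by
  rw [Metric.tendsto_atTop]
  intro ε hε
  rcases exists_nat_one_div_lt hε with ⟨N, hN⟩
  refine ⟨N + 1, fun k hk => ?_⟩
  have hk1 : 1 ≤ k := le_trans (Nat.le_add_left 1 N) hk
  have h2 : (0:ℝ) < (N:ℝ) + 1 := by positivity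
  have hkR : ((N:ℝ) + 1) ≤ (k:ℝ) := by exact_mod_cast hk
  have h3 : 1 / (k:ℝ) ≤ 1 / ((N:ℝ)+1) := by
    apply one_div_le_one_div_of_le h2 hkR
  rw [Real.dist_eq, sub_zero, abs_of_pos (hpos k)]
  calc t k < 1 / (k:ℝ) := hlt k hk1
  _ ≤ 1 / ((N:ℝ)+1) := h3
  _ < ε := hN

end Rec

variable {E : Set ℝ}

/-- D0 : existence of an element of Ẽ₀ᵈ -/
lemma exists_memE0d (hE : E ⊆ Ici 0) (hacc : (0:ℝ) ∈ closure (E \ {0})) :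
    ∃ t : ℕ → ℝ, MemE0d E t := by
  rcases acc_near hE hacc 1 one_pos with ⟨e0, he0E, he0p, _⟩
  have step : ∀ (n : ℕ) (x : ℝ), (x ∈ E ∧ 0 < x) →
      ∃ y, (y ∈ E ∧ 0 < y) ∧ (y < x ∧ y < 1/((n:ℝ)+1)) := by
    intro n x hx
    have hmin : (0:ℝ) < min x (1/((n:ℝ)+1)) := lt_min hx.2 (by positivity)
    rcases acc_near hE hacc _ hmin with ⟨e, heE, hep, helt⟩
    exact ⟨e, ⟨heE, hep⟩, lt_of_lt_of_le helt (min_le_left _ _),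
      lt_of_lt_of_le helt (min_le_right _ _)⟩
  rcases exists_seq_rec (fun x => x ∈ E ∧ 0 < x)
    (fun n x y => y < x ∧ y < 1/((n:ℝ)+1)) e0 ⟨he0E, he0p⟩ step with ⟨t, _, hP, hR⟩
  refine ⟨t, Eventually.of_forall (fun n => (hR n).1.le), fun n => ⟨(hP n).1, ?_⟩, ?_⟩
  · simpa using ne_of_gt (hP n).2
  · apply tendsto_zero_of_lt_one_div (fun n => (hP n).2)
    intro k hk
    have := (hR (k-1)).2
    have hkk : k - 1 + 1 = k := Nat.succ_pred_eq_of_pos hk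
    rw [hkk] at this
    have hcast : ((k-1 : ℕ):ℝ) + 1 = (k:ℝ) := by
      have : ((k-1:ℕ):ℝ) = (k:ℝ) - 1 := by
        push_cast [Nat.cast_sub hk]
        ring
      rw [this]; ring
    rwa [hcast] at this

/-- D1 : block gaps at all scales -/
lemma block_exists (hE : E ⊆ Ici 0) (hacc : (0:ℝ) ∈ closure (E \ {0})) (hCSP : CSP E) :
    ∀ J δ : ℝ, 0 < δ → ∃ a b : ℝ, IsGapComponent E a b ∧ 0 < a ∧ a < δ ∧ J * a < b := by
  intro J δ hδ
  rcases exists_memE0d hE hacc with ⟨t, ht⟩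
  rcases hCSP t ht with ⟨A, B, hIE, _⟩
  have h1 := memIE_eventually_mul_lt hE hacc hIE J
  have h2 : ∀ᶠ n in atTop, A n < δ := hIE.2.2.1.eventually (eventually_lt_nhds hδ)
  rcases (h1.and h2).exists with ⟨n, hn1, hn2⟩
  exact ⟨A n, B n, hIE.1 n, (memIE_pos hE hacc hIE n).1, hn2, hn1⟩

/-- D2 : thinness of some block -/
lemma thinness (hE : E ⊆ Ici 0) (hacc : (0:ℝ) ∈ closure (E \ {0})) (hCSP : CSP E) :
    ∃ M₀ : ℕ, 2 ≤ M₀ ∧ ∀ J : ℝ, 0 < J → ∃ δ : ℝ, 0 < δ ∧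
      ∀ a b : ℝ, IsGapComponent E a b → a < δ → (M₀:ℝ) * a < b → J * a < b := by
  by_contra hcon
  push_neg at hcon
  -- for every μ there is a bad window
  have hall : ∀ μ : ℕ, ∃ J : ℝ, 0 < J ∧ ∀ δ : ℝ, 0 < δ →
      ∃ a b : ℝ, IsGapComponent E a b ∧ a < δ ∧ ((μ:ℝ)+2) * a < b ∧ b ≤ J * a := by
    intro μ
    rcases hcon (μ + 2) (by omega) with ⟨J, hJ, hbad⟩
    refine ⟨J, hJ, fun δ hδ => ?_⟩
    rcases hbad δ hδ with ⟨a, b, hgap, haδ, hmul, hnot⟩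
    refine ⟨a, b, hgap, haδ, by push_cast at hmul ⊢; linarith, hnot⟩
  choose Θ hΘpos hbad using hall
  set w : ℕ → ℕ := fun n => (Nat.unpair n).1 with hw
  -- recursive construction of the probe sequence
  rcases acc_near hE hacc 1 one_pos with ⟨e0, he0E, he0p, _⟩
  have step : ∀ (n : ℕ) (x : ℝ), (x ∈ E ∧ 0 < x) →
      ∃ y, (y ∈ E ∧ 0 < y) ∧ (y < x ∧ y < 1/((n:ℝ)+1) ∧
        ∃ a b : ℝ, IsGapComponent E a b ∧ ((w (n+1):ℝ)+2) * a < b ∧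
          b ≤ Θ (w (n+1)) * a ∧ a/2 < y ∧ y ≤ a) := by
    intro n x hx
    have hmin : (0:ℝ) < min x (1/((n:ℝ)+1)) := lt_min hx.2 (by positivity)
    rcases hbad (w (n+1)) _ hmin with ⟨a, b, hgap, haδ, hmul, hΘb⟩
    have hapos : 0 < a := gap_pos hE hacc hgap
    rcases gap_left_mem hgap (c := a/2) (by positivity) (by linarith) with ⟨e, heE, he1, he2⟩
    have h1 : e < x := lt_of_le_of_lt he2 (lt_of_lt_of_le haδ (min_le_left _ _))
    have h2 : e < 1/((n:ℝ)+1) := lt_of_le_of_lt he2 (lt_of_lt_of_le haδ (min_le_right _ _))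
    exact ⟨e, ⟨heE, lt_trans (by positivity) he1⟩, h1, h2, a, b, hgap, hmul, hΘb, he1, he2⟩
  rcases exists_seq_rec (fun x => x ∈ E ∧ 0 < x) _ e0 ⟨he0E, he0p⟩ step with ⟨t, _, hP, hR⟩
  have htE0d : MemE0d E t := by
    refine ⟨Eventually.of_forall (fun n => (hR n).1.le), fun n => ⟨(hP n).1, ?_⟩, ?_⟩
    · simpa using ne_of_gt (hP n).2
    · apply tendsto_zero_of_lt_one_div (fun n => (hP n).2)
      intro k hk
      have := (hR (k-1)).2.1
      have hkk : k - 1 + 1 = k := Nat.succ_pred_eq_of_pos hk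
      rw [hkk] at this
      have hcast : ((k-1 : ℕ):ℝ) + 1 = (k:ℝ) := by
        have h' : ((k-1:ℕ):ℝ) = (k:ℝ) - 1 := by push_cast [Nat.cast_sub hk]; ring
        rw [h']; ring
      rwa [hcast] at this
  rcases hCSP t htE0d with ⟨A, B, hIE, c₁, c₂, hc₁, hc₂, hAs⟩
  -- choose the window index
  set m₀ : ℕ := max 2 (⌈c₂⌉₊ + 2) with hm₀
  have hm₀2 : 2 ≤ m₀ := le_max_left _ _
  have hm₀c₂ : c₂ < (m₀:ℝ) := by
    have h1 : ((⌈c₂⌉₊ + 2 : ℕ):ℝ) ≤ (m₀:ℝ) := by exact_mod_cast le_max_right 2 (⌈c₂⌉₊ + 2)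
    have h2 : c₂ ≤ (⌈c₂⌉₊:ℝ) := Nat.le_ceil c₂
    push_cast at h1
    linarith
  set Θ₀ : ℝ := Θ (m₀ - 2) with hΘ₀
  set Kst : ℝ := max (max 2 (1/c₁)) Θ₀ + 1 with hKst
  have hKst2 : 2 ≤ Kst := by
    have := le_max_left (2:ℝ) (1/c₁)
    have := le_max_left (max (2:ℝ) (1/c₁)) Θ₀
    simp only [hKst]
    nlinarith [le_max_left (max (2:ℝ) (1/c₁)) Θ₀, le_max_left (2:ℝ) (1/c₁)]
  have hKstc₁ : 1/c₁ < Kst := by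
    have h1 := le_max_right (2:ℝ) (1/c₁)
    have h2 := le_max_left (max (2:ℝ) (1/c₁)) Θ₀
    simp only [hKst]; linarith
  have hKstΘ : Θ₀ < Kst := by
    have := le_max_right (max (2:ℝ) (1/c₁)) Θ₀
    simp only [hKst]; linarith
  rcases eventually_atTop.1 (memIE_eventually_mul_lt hE hacc hIE Kst) with ⟨N₁, hN₁⟩
  set n : ℕ := Nat.pair (m₀ - 2) (N₁ + 1) with hn
  have hnN₁ : N₁ + 1 ≤ n := Nat.right_le_pair _ _
  have hn1 : 1 ≤ n := le_trans (by omega) hnN₁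
  have hwn : w n = m₀ - 2 := by
    rw [hw, hn]; simp [Nat.unpair_pair]
  -- window data at n
  have hdata := (hR (n-1)).2.2
  have hnn : n - 1 + 1 = n := by omega
  rw [hnn] at hdata
  rcases hdata with ⟨a, b, hgap, hmul, hΘb, he1, he2⟩
  rw [hwn] at hmul hΘb
  have hcast2 : ((m₀ - 2 : ℕ):ℝ) + 2 = (m₀:ℝ) := by
    have : ((m₀ - 2:ℕ):ℝ) = (m₀:ℝ) - 2 := by push_cast [Nat.cast_sub hm₀2]; ring
    rw [this]; ring
  rw [hcast2] at hmul
  -- notation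
  set e : ℝ := t n with he
  have heE : e ∈ E := (hP n).1
  have hepos : 0 < e := (hP n).2
  have hapos : 0 < a := by linarith
  set α : ℝ := A n with hα
  set β : ℝ := B n with hβ
  have hgapn : IsGapComponent E α β := hIE.1 n
  have hc₁e : c₁ * e < α := (hAs n).1
  have hc₂e : α < c₂ * e := (hAs n).2
  have hαpos : 0 < α := lt_trans (by positivity) hc₁e
  have hβK : Kst * α < β := hN₁ n (by omega)
  have hβ2α : 2 * α < β := by nlinarith
  -- case analysis
  rcases le_or_gt β e with h1 | h1
  · -- gap entirely below e
    have h3 : 1 < Kst * c₁ := by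
      rw [div_lt_iff₀ hc₁] at hKstc₁
      linarith
    have h4 : 1 * e < Kst * c₁ * e := mul_lt_mul_of_pos_right h3 hepos
    rw [one_mul, mul_assoc] at h4
    have h5 : Kst * (c₁ * e) < Kst * α :=
      mul_lt_mul_of_pos_left hc₁e (by linarith : (0:ℝ) < Kst)
    linarith
  · rcases lt_or_ge α e with h2 | h2
    · exact gap_notmem hgapn heE ⟨h2, h1⟩
    · rcases lt_trichotomy α a with h3 | h3 | h3
      · have hsep := gap_sep hgapn hgap h3
        linarith
      · have hbb : β = b := gap_eq_left (h3 ▸ hgapn) hgap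
        have hΘα : b ≤ Θ₀ * α := by rw [← h3] at hΘb; exact hΘb
        have h7 : Θ₀ * α < Kst * α := mul_lt_mul_of_pos_right hKstΘ hαpos
        rw [hbb] at hβK
        linarith
      · rcases lt_or_ge α b with h4 | h4
        · have := gap_sep hgap hgapn h3
          linarith
        · have h5 : c₂ * e ≤ c₂ * a := mul_le_mul_of_nonneg_left he2 hc₂.le
          have h6 : c₂ * a < (m₀:ℝ) * a := by
            apply mul_lt_mul_of_pos_right hm₀c₂ hapos
          linarith


lemma backward_dir {E : Set ℝ} (hE : E ⊆ Ici 0) (hacc : (0:ℝ) ∈ closure (E \ {0}))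
    (l m : ℕ → ℝ) (hLIE : MemIE E l m) (hM : Mlim l m < ⊤) : CSP E := by
  classical
  have hposL := memIE_pos hE hacc hLIE
  have hmpos : ∀ k, 0 < m k := fun k => (hposL k).1.trans (hposL k).2
  -- extract the real constant C
  have h1 : Mlim l m < Mlim l m + 1 := ENNReal.lt_add_right hM.ne one_ne_zero
  have hev₀ : ∀ᶠ k in atTop, ENNReal.ofReal (l k / m (k+1)) < Mlim l m + 1 :=
    Filter.eventually_lt_of_limsup_lt h1
  set C : ℝ := max 1 ((Mlim l m + 1).toReal) with hC
  have hC1 : (1:ℝ) ≤ C := le_max_left _ _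
  have hC0 : (0:ℝ) < C := lt_of_lt_of_le one_pos hC1
  have hCev : ∀ᶠ k in atTop, l k ≤ C * m (k+1) := by
    filter_upwards [hev₀] with k hk
    have hne : Mlim l m + 1 ≠ ⊤ := by
      simp [ENNReal.add_eq_top, hM.ne]
    have hlt : l k / m (k+1) < (Mlim l m + 1).toReal := by
      rw [← ENNReal.ofReal_lt_iff_lt_toReal (div_nonneg (hposL k).1.le (hmpos _).le) hne]
      exact hk
    have := hlt.le.trans (le_max_right 1 ((Mlim l m + 1).toReal))
    calc l k = (l k / m (k+1)) * m (k+1) := (div_mul_cancel₀ _ (ne_of_gt (hmpos _))).symm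
    _ ≤ C * m (k+1) := mul_le_mul_of_nonneg_right this (hmpos _).le
  -- tail monotonicity, C-threshold
  rcases almostDecreasing_tail_mono hLIE.2.1 with ⟨Nl, hNl⟩
  rcases eventually_atTop.1 hCev with ⟨NC, hNC⟩
  set N₀ : ℕ := max Nl NC with hN₀
  have hNlN : Nl ≤ N₀ := le_max_left _ _
  have hNCN : NC ≤ N₀ := le_max_right _ _
  -- given τ
  intro t ht
  have htpos : ∀ n, 0 < t n := by
    intro n
    have h := ht.2.1 n
    rcases lt_or_eq_of_le (show (0:ℝ) ≤ t n from hE h.1) with h' | h'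
    · exact h'
    · exact absurd h'.symm (by simpa using h.2)
  have hm0 := memIE_b_tendsto hE hacc hLIE
  have hex : ∀ n, ∃ k, N₀ + 1 ≤ k ∧ m k ≤ t n := by
    intro n
    rcases eventually_atTop.1 (hm0.eventually (eventually_lt_nhds (htpos n))) with ⟨N, hN⟩
    exact ⟨max N (N₀+1), le_max_right _ _, (hN _ (le_max_left _ _)).le⟩
  set K : ℕ → ℕ := fun n => Nat.find (hex n) with hK
  have hK1 : ∀ n, N₀ + 1 ≤ K n := fun n => (Nat.find_spec (hex n)).1
  have hK2 : ∀ n, m (K n) ≤ t n := fun n => (Nat.find_spec (hex n)).2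
  have hKmin : ∀ n k, k < K n → ¬(N₀ + 1 ≤ k ∧ m k ≤ t n) :=
    fun n k hk => Nat.find_min (hex n) hk
  have hKmono : ∀ n, t (n+1) ≤ t n → K n ≤ K (n+1) := by
    intro n hmono
    exact Nat.find_mono (fun k hk => ⟨hk.1, hk.2.trans hmono⟩)
  have hKge : ∀ n J, (∀ k, N₀ + 1 ≤ k → k ≤ J + 1 → t n < m k) → J + 2 ≤ K n := by
    intro n J hyp
    rw [hK, Nat.le_find_iff]
    rintro k hk ⟨hk1, hk2⟩
    exact absurd hk2 (not_le.2 (hyp k hk1 (by omega)))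
  clear_value K
  set a' : ℕ → ℝ := fun n => l (K n - 1) with ha'
  set b' : ℕ → ℝ := fun n => m (K n - 1) with hb'
  -- threshold
  rcases eventually_atTop.1
    ((ht.2.2.eventually (eventually_lt_nhds (hmpos (N₀+1)))).and ht.1) with ⟨N₃, hN₃⟩
  have hKgt : ∀ n, N₃ ≤ n → N₀ + 2 ≤ K n := by
    intro n hn
    rcases lt_or_ge (K n) (N₀ + 2) with h | h
    · exfalso
      have : K n = N₀ + 1 := le_antisymm (Nat.lt_succ_iff.1 h) (hK1 n)
      have := this ▸ hK2 n
      exact absurd this (not_le.2 (hN₃ n hn).1)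
    · exact h
  have hmain : ∀ n, N₃ ≤ n → t n ≤ a' n ∧ a' n ≤ C * t n := by
    intro n hn
    have hKn := hKgt n hn
    have hKpos : 1 ≤ K n := le_trans (by omega) hKn
    have hsub : K n - 1 + 1 = K n := Nat.succ_pred_eq_of_pos hKpos
    have hmgt : t n < m (K n - 1) := by
      have hmin := hKmin n (K n - 1) (by omega)
      by_contra hc
      exact hmin ⟨by omega, not_lt.1 hc⟩
    have htle : t n ≤ l (K n - 1) := by
      have := gap_notmem (hLIE.1 (K n - 1)) (ht.2.1 n).1
      simp only [mem_Ioo, not_and, not_lt] at this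
      by_contra hc
      exact absurd (this (not_le.1 hc)) (not_le.2 hmgt)
    have hCk : l (K n - 1) ≤ C * m (K n) := by
      have := hNC (K n - 1) (by omega)
      rwa [hsub] at this
    exact ⟨htle, hCk.trans (mul_le_mul_of_nonneg_left (hK2 n) hC0.le)⟩
  -- properties of a'
  have hdec' : AlmostDecreasing a' := by
    rcases eventually_atTop.1 ht.1 with ⟨Nt, hNt⟩
    filter_upwards [eventually_ge_atTop (max N₃ Nt)] with n hn
    have hmono : K n ≤ K (n+1) := hKmono n (hNt n ((le_max_right _ _).trans hn))
    have h1 : Nl ≤ K n - 1 := by have := hK1 n; omega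
    exact hNl _ _ h1 (by omega)
  have hKtop : Tendsto (fun n => K n - 1) atTop atTop := by
    rw [tendsto_atTop_atTop]
    intro J
    have hev : ∀ᶠ n in atTop, ∀ k ∈ Finset.Icc (N₀+1) (J+1), t n < m k := by
      rw [Filter.eventually_all_finset]
      intro k _
      exact ht.2.2.eventually (eventually_lt_nhds (hmpos k))
    rcases eventually_atTop.1 hev with ⟨N, hN⟩
    refine ⟨N, fun n hn => ?_⟩
    have hfind : J + 2 ≤ K n :=
      hKge n J (fun k hk1 hk2 => hN n hn k (Finset.mem_Icc.2 ⟨hk1, hk2⟩))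
    omega
  have h0' : Tendsto a' atTop (𝓝 0) := by
    apply squeeze_zero' (Eventually.of_forall fun n => (hposL (K n - 1)).1.le)
    · filter_upwards [eventually_ge_atTop N₃] with n hn
      exact (hmain n hn).2
    · simpa using ht.2.2.const_mul C
  have hr' : Tendsto (fun n => (b' n - a' n) / b' n) atTop (𝓝 1) :=
    hLIE.2.2.2.comp hKtop
  -- conclude
  apply patch_tau htpos N₃ (fun n => hLIE.1 (K n - 1)) hdec' h0' hr'
    (fun n => (hposL (K n - 1)).1) (c₁ := 1/2) (c₂ := C+1) (by norm_num) (by linarith)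
  intro n hn
  have h := hmain n hn
  have := htpos n
  constructor
  · linarith [h.1]
  · linarith [h.2]


set_option maxHeartbeats 2000000 in
lemma forward_dir (hE : E ⊆ Ici 0) (hacc : (0:ℝ) ∈ closure (E \ {0})) (hCSP : CSP E) :
    ∃ l m : ℕ → ℝ, IsUniversal E l m ∧ Mlim l m < ⊤ := by
  classical
  obtain ⟨M₀, hM₀2, hthin⟩ := thinness hE hacc hCSP
  have hM₀R : (2:ℝ) ≤ (M₀:ℝ) := by exact_mod_cast hM₀2
  set Blk : ℝ → ℝ → Prop := fun a b => IsGapComponent E a b ∧ (M₀:ℝ) * a < b with hBlk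
  -- next-block-gap selection
  have exNext : ∀ x : ℝ, 0 < x → ∃ z, ((0 < z ∧ ∃ w, Blk z w) ∧
      (z < x ∧ ∀ c d, Blk c d → c < x → c ≤ z)) := by
    intro x hx
    obtain ⟨a₁, b₁, hg₁, hpos₁, hlt₁, hmul₁⟩ := block_exists hE hacc hCSP (M₀:ℝ) x hx
    set S : Set ℝ := {c | ∃ d, Blk c d ∧ c < x} with hS
    have hmem : a₁ ∈ S := ⟨b₁, ⟨hg₁, hmul₁⟩, hlt₁⟩
    have hSne : S.Nonempty := ⟨a₁, hmem⟩
    have hbdd : BddAbove S := ⟨x, by rintro c ⟨d, _, hcx⟩; exact hcx.le⟩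
    set As : ℝ := sSup S with hAs
    have hAspos : 0 < As := lt_of_lt_of_le hpos₁ (le_csSup hbdd hmem)
    have hdivlt : As / (M₀:ℝ) < As := div_lt_self hAspos (by linarith)
    obtain ⟨s, hsS, hs⟩ := exists_lt_of_lt_csSup hSne hdivlt
    obtain ⟨d, hblkd, hsx⟩ := hsS
    have hspos : 0 < s := lt_trans (by positivity) hs
    refine ⟨s, ⟨hspos, d, hblkd⟩, hsx, ?_⟩
    intro c d' hblk' hcx
    by_contra hne
    push_neg at hne
    have hsep : d ≤ c := gap_sep hblkd.1 hblk'.1 hne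
    have h1 : (M₀:ℝ) * s < c := lt_of_lt_of_le hblkd.2 hsep
    have h2 : As < (M₀:ℝ) * s := by
      rw [div_lt_iff₀ (by linarith : (0:ℝ) < (M₀:ℝ))] at hs
      linarith [hs]
    have h3 : c ≤ As := le_csSup hbdd ⟨d', hblk', hcx⟩
    linarith
  -- recursion
  obtain ⟨a₀, b₀, hg₀, hpos₀, _, hmul₀⟩ := block_exists hE hacc hCSP (M₀:ℝ) 1 one_pos
  rcases exists_seq_rec (fun z => 0 < z ∧ ∃ w, Blk z w)
    (fun _ x y => y < x ∧ ∀ c d, Blk c d → c < x → c ≤ y) a₀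
    ⟨hpos₀, b₀, hg₀, hmul₀⟩ (fun _ x hx => exNext x hx.1) with ⟨l, hl0eq, hP, hR⟩
  have lpos : ∀ n, 0 < l n := fun n => (hP n).1
  choose m hm using fun n => (hP n).2
  have hdecr : ∀ n, l (n+1) < l n := fun n => (hR n).1
  have hmax : ∀ n c d, Blk c d → c < l n → c ≤ l (n+1) := fun n => (hR n).2
  have hmpos : ∀ n, 0 < m n := fun n => lt_trans (lpos n) (hm n).1.2.1
  have hhalf : ∀ n, l (n+1) < l n / 2 := by
    intro n
    have hsep : m (n+1) ≤ l n := gap_sep (hm (n+1)).1 (hm n).1 (hdecr n)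
    have h1 : (M₀:ℝ) * l (n+1) < l n := lt_of_lt_of_le (hm (n+1)).2 hsep
    have h2 : 2 * l (n+1) ≤ (M₀:ℝ) * l (n+1) :=
      mul_le_mul_of_nonneg_right hM₀R (lpos (n+1)).le
    linarith
  have hgeo : ∀ n, l n ≤ l 0 * (1/2)^n := by
    intro n
    induction n with
    | zero => simp
    | succ k ih =>
      have := hhalf k
      have h2 : l k / 2 ≤ (l 0 * (1/2)^k)/2 := by linarith
      calc l (k+1) ≤ l k / 2 := (hhalf k).le
      _ ≤ (l 0 * (1/2)^k)/2 := h2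
      _ = l 0 * (1/2)^(k+1) := by ring
  have hl0 : Tendsto l atTop (𝓝 0) := by
    apply squeeze_zero (fun n => (lpos n).le) hgeo
    have := (tendsto_pow_atTop_nhds_zero_of_lt_one (by norm_num : (0:ℝ) ≤ 1/2)
      (by norm_num : (1:ℝ)/2 < 1)).const_mul (l 0)
    simpa using this
  have hlm : ∀ n, 0 < l n ∧ l n < m n := fun n => ⟨lpos n, (hm n).1.2.1⟩
  have hdiv : Tendsto (fun n => l n / m n) atTop (𝓝 0) := by
    rw [Metric.tendsto_atTop]
    intro ε hε
    obtain ⟨δ, hδpos, hδ⟩ := hthin (1/ε + 1) (by positivity)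
    rcases eventually_atTop.1 (hl0.eventually (eventually_lt_nhds hδpos)) with ⟨N, hN⟩
    refine ⟨N, fun n hn => ?_⟩
    have hJ : (1/ε + 1) * l n < m n := hδ (l n) (m n) (hm n).1 (hN n hn) (hm n).2
    rw [Real.dist_eq, sub_zero, abs_of_pos (div_pos (lpos n) (hmpos n))]
    rw [div_lt_iff₀ (hmpos n)]
    have h2 : l n < ε * ((1/ε + 1) * l n) := by
      have : ε * (1/ε + 1) = 1 + ε := by field_simp
      rw [← mul_assoc] at *
      nlinarith [lpos n, hε]
    calc l n < ε * ((1/ε+1) * l n) := h2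
    _ ≤ ε * m n := by nlinarith [hJ, hε]
  have hIE_L : MemIE E l m :=
    ⟨fun n => (hm n).1, Eventually.of_forall (fun n => (hdecr n).le), hl0,
      div_tendsto_ratio hlm hdiv⟩
  -- universality
  have hexj : ∀ (A : ℕ → ℝ), (∀ n, 0 < A n) → ∀ n, ∃ j, l j ≤ A n := by
    intro A hA n
    rcases (hl0.eventually (eventually_lt_nhds (hA n))).exists with ⟨j, hj⟩
    exact ⟨j, hj.le⟩
  have huniv : ∀ A B : ℕ → ℝ, MemIE E A B →
      ∃ (N₁ : ℕ) (f : ℕ → ℕ), ∀ n, N₁ ≤ n → A n = l (f n) := by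
    intro A B hAB
    have hApos : ∀ n, 0 < A n := fun n => (memIE_pos hE hacc hAB n).1
    have hev := (memIE_eventually_mul_lt hE hacc hAB (M₀:ℝ)).and
      (hAB.2.2.1.eventually (eventually_lt_nhds (lpos 0)))
    rcases eventually_atTop.1 hev with ⟨N₁, hN₁⟩
    refine ⟨N₁, fun n => Nat.find (hexj A hApos n), fun n hn => ?_⟩
    set j : ℕ := Nat.find (hexj A hApos n) with hj
    have hspec : l j ≤ A n := Nat.find_spec (hexj A hApos n)
    rcases eq_or_lt_of_le hspec with heq | hlt
    · exact heq.symm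
    · exfalso
      have hblkA : Blk (A n) (B n) := ⟨hAB.1 n, (hN₁ n hn).1⟩
      have hj0 : j ≠ 0 := by
        intro h0
        rw [h0] at hspec
        exact absurd hspec (not_le.2 (hN₁ n hn).2)
      have hjm : ¬ l (j-1) ≤ A n := Nat.find_min (hexj A hApos n) (by omega)
      have hAlt : A n < l (j-1) := not_le.1 hjm
      have := hmax (j-1) (A n) (B n) hblkA hAlt
      rw [(by omega : j - 1 + 1 = j)] at this
      exact absurd this (not_le.2 hlt)
  -- M(L) < ∞
  have hMfin : Mlim l m < ⊤ := by
    by_contra hMt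
    have hMtop : Mlim l m = ⊤ := by
      rcases lt_or_eq_of_le (le_top : Mlim l m ≤ ⊤) with h | h
      · exact absurd h hMt
      · exact h
    -- frequently large holes
    have hfreq : ∀ (X : ℝ) (N : ℕ), ∃ p, N ≤ p ∧ X < l p / m (p+1) := by
      intro X N
      by_contra hc
      push_neg at hc
      have hev : ∀ᶠ p in atTop, ENNReal.ofReal (l p / m (p+1)) ≤ ENNReal.ofReal X := by
        rw [eventually_atTop]
        exact ⟨N, fun p hp => ENNReal.ofReal_le_ofReal (hc p hp)⟩
      have hle : Mlim l m ≤ ENNReal.ofReal X := limsup_le_of_le (by isBoundedDefault) hev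
      rw [hMtop] at hle
      exact absurd (hle.trans_lt ENNReal.ofReal_lt_top) (lt_irrefl ⊤)
    set Q : ℝ := (M₀:ℝ) + 1 with hQ
    have hQ3 : (3:ℝ) ≤ Q := by simp only [hQ]; linarith
    have hQpos : (0:ℝ) < Q := by linarith
    -- the hole lemma (†)
    have hdag : ∀ p x : ℝ, ∀ pn : ℕ, x ≥ m (pn+1) → x < l pn / (2*Q) →
        ∃ e ∈ E, x ≤ e ∧ e ≤ Q * x := by
      intro p x pn hx1 hx2
      by_contra hc
      push_neg at hc
      have hxpos : 0 < x := lt_of_lt_of_le (hmpos (pn+1)) hx1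
      have hmiss : Ioo x (Q*x) ∩ E = ∅ := by
        ext y
        simp only [mem_inter_iff, mem_Ioo, mem_empty_iff_false, iff_false, not_and]
        rintro ⟨h1, h2⟩ hyE
        exact absurd h2 (not_lt.2 (hc y hyE h1.le).le)
      obtain ⟨ebar, hebarE, hebar1, hebar2⟩ := gap_left_mem (hm pn).1
        (c := l pn / 2) (by linarith [lpos pn]) (by linarith [lpos pn])
      have hQx : Q * x < l pn / 2 := by
        rw [lt_div_iff₀ (by positivity : (0:ℝ) < 2*Q)] at hx2
        nlinarith
      obtain ⟨A', B', hgap', hA'x, hQxB', hB'e⟩ := gap_extend hE (α := x) (β := Q*x)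
        hxpos.le (by nlinarith) hmiss hebarE (le_of_lt (lt_trans hQx hebar1))
      have hblk' : Blk A' B' := by
        refine ⟨hgap', ?_⟩
        have h1 : (M₀:ℝ) * A' ≤ (M₀:ℝ) * x := mul_le_mul_of_nonneg_left hA'x (by linarith)
        have h2 : (M₀:ℝ) * x < Q * x := by
          apply mul_lt_mul_of_pos_right _ hxpos
          simp only [hQ]; linarith
        linarith
      rcases le_or_gt A' (l (pn+1)) with h4 | h4
      · have hmaxi := ((hm (pn+1)).1).2.2.2 A' B' hgap'.1 h4
          (by nlinarith : m (pn+1) ≤ B') hgap'.2.2.1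
        have : B' = m (pn+1) := hmaxi.2
        nlinarith
      · have hA'lt : A' < l pn := by
          have : l pn / (2*Q) < l pn := div_lt_self (lpos pn) (by linarith)
          linarith
        have := hmax pn A' B' hblk' hA'lt
        linarith
    -- probe sequence construction
    rcases acc_near hE hacc 1 one_pos with ⟨e0, he0E, he0p, _⟩
    have step : ∀ (n : ℕ) (x : ℝ), (x ∈ E ∧ 0 < x) →
        ∃ y, (y ∈ E ∧ 0 < y) ∧ (y < x ∧ y < 1/((n:ℝ)+1) ∧
          ∃ p : ℕ, ((n:ℝ)+3) * m (p+1) < y ∧ ((n:ℝ)+3) * y < l p) := by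
      intro n x hx
      set C' : ℝ := (n:ℝ)+3 with hC'
      have hC'3 : (3:ℝ) ≤ C' := by
        have hn0 : (0:ℝ) ≤ (n:ℝ) := Nat.cast_nonneg n
        simp only [hC']; linarith
      have hmin : (0:ℝ) < min x (1/((n:ℝ)+1)) := lt_min hx.2 (by positivity)
      rcases eventually_atTop.1 (hl0.eventually (eventually_lt_nhds hmin)) with ⟨N, hN⟩
      obtain ⟨p, hpN, hHgt⟩ := hfreq (4*Q^2*C'^2) N
      set H : ℝ := l p / m (p+1) with hH
      have hmp : 0 < m (p+1) := hmpos (p+1)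
      have hQ2 : (9:ℝ) ≤ Q^2 := by nlinarith
      have hC2 : (9:ℝ) ≤ C'^2 := by nlinarith
      have hH1 : 1 < H := by nlinarith
      have hs : Real.sqrt H < H := by
        rw [Real.sqrt_lt' (by linarith : (0:ℝ) < H)]
        nlinarith
      set s : ℝ := Real.sqrt H with hsdef
      have hspos : 0 < s := Real.sqrt_pos.2 (by linarith)
      have hsgt : 2*Q*C' < s := by
        rw [hsdef, show (2*Q*C') = ((2*Q*C'):ℝ) from rfl]
        rw [← Real.sqrt_sq (by positivity : (0:ℝ) ≤ 2*Q*C')]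
        apply Real.sqrt_lt_sqrt (by positivity)
        nlinarith
      set x' : ℝ := m (p+1) * s / (2*Q) with hx'
      have hx'pos : 0 < x' := by positivity
      have hx'ge : m (p+1) ≤ x' := by
        rw [hx', le_div_iff₀ (by positivity : (0:ℝ) < 2*Q)]
        have h2Q : 2*Q ≤ s := by nlinarith
        exact mul_le_mul_of_nonneg_left h2Q hmp.le
      have hlpH : l p = m (p+1) * H := by
        rw [hH]; field_simp
      have hx'lt : x' < l p / (2*Q) := by
        rw [hx', div_lt_div_iff₀ (by positivity) (by positivity), hlpH]
        have h1 : m (p+1) * s < m (p+1) * H := mul_lt_mul_of_pos_left hs hmp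
        nlinarith
      obtain ⟨e, heE, he1, he2⟩ := hdag p x' p hx'ge hx'lt
      have hepos : 0 < e := lt_of_lt_of_le hx'pos he1
      refine ⟨e, ⟨heE, hepos⟩, ?_, ?_, p, ?_, ?_⟩
      · -- e < x
        have h1 : Q * x' < l p / 2 := by
          rw [lt_div_iff₀ (by norm_num : (0:ℝ) < 2)]
          have h2 : x' * (2*Q) < l p := (lt_div_iff₀ (by positivity : (0:ℝ) < 2*Q)).1 hx'lt
          linarith [h2]
        have h2 : l p < x := lt_of_lt_of_le (hN p hpN) (min_le_left _ _)
        nlinarith [lpos p]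
      · -- e < 1/(n+1)
        have h1 : Q * x' < l p / 2 := by
          rw [lt_div_iff₀ (by norm_num : (0:ℝ) < 2)]
          have h2 : x' * (2*Q) < l p := (lt_div_iff₀ (by positivity : (0:ℝ) < 2*Q)).1 hx'lt
          linarith [h2]
        have h2 : l p < 1/((n:ℝ)+1) := lt_of_lt_of_le (hN p hpN) (min_le_right _ _)
        nlinarith [lpos p]
      · -- C' * m (p+1) < e
        have h1 : C' * m (p+1) < x' := by
          rw [hx', lt_div_iff₀ (by positivity : (0:ℝ) < 2*Q)]
          nlinarith
        linarith
      · -- C' * e < l p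
        have h1 : e ≤ m (p+1) * s / 2 := by
          have : Q * x' = m (p+1) * s / 2 := by rw [hx']; field_simp
          linarith [he2, this ▸ he2]
        have h2 : C' * (m (p+1) * s / 2) < l p := by
          rw [hlpH]
          have hsH : s * s = H := Real.mul_self_sqrt (by linarith)
          have hC's : C' < s/(2*Q) := by
            rw [lt_div_iff₀ (by positivity : (0:ℝ) < 2*Q)]
            nlinarith
          have : C' * (m (p+1) * s / 2) < (s/(2*Q)) * (m (p+1) * s / 2) := by
            apply mul_lt_mul_of_pos_right hC's (by positivity)
          calc C' * (m (p+1) * s / 2) < (s/(2*Q)) * (m (p+1) * s / 2) := this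
          _ = m (p+1) * (s*s) / (4*Q) := by field_simp; ring
          _ = m (p+1) * H / (4*Q) := by rw [hsH]
          _ < m (p+1) * H := by
            have h3 : 0 < m (p+1) * H := by nlinarith
            apply div_lt_self h3 (by linarith)
        nlinarith [hmp, hspos]
    rcases exists_seq_rec (fun x => x ∈ E ∧ 0 < x) _ e0 ⟨he0E, he0p⟩ step with ⟨t, _, hPt, hRt⟩
    have htE0d : MemE0d E t := by
      refine ⟨Eventually.of_forall (fun n => (hRt n).1.le), fun n => ⟨(hPt n).1, ?_⟩, ?_⟩
      · simpa using ne_of_gt (hPt n).2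
      · apply tendsto_zero_of_lt_one_div (fun n => (hPt n).2)
        intro k hk
        have := (hRt (k-1)).2.1
        have hkk : k - 1 + 1 = k := by omega
        rw [hkk] at this
        have hcast : ((k-1 : ℕ):ℝ) + 1 = (k:ℝ) := by
          have h' : ((k-1:ℕ):ℝ) = (k:ℝ) - 1 := by push_cast [Nat.cast_sub hk]; ring
          rw [h']; ring
        rwa [hcast] at this
    rcases hCSP t htE0d with ⟨A, B, hIE', c₁, c₂, hc₁, hc₂, hAs'⟩
    rcases eventually_atTop.1 (memIE_eventually_mul_lt hE hacc hIE' (M₀:ℝ)) with ⟨N₂, hN₂⟩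
    set n : ℕ := max (max N₂ 1) (⌈max c₂ (1/c₁)⌉₊ + 1) with hn
    have hn1 : 1 ≤ n := le_trans (le_max_right N₂ 1) (le_max_left _ _)
    have hnN₂ : N₂ ≤ n := le_trans (le_max_left N₂ 1) (le_max_left _ _)
    have hnc : max c₂ (1/c₁) < (n:ℝ) + 2 := by
      have h1 : (⌈max c₂ (1/c₁)⌉₊ + 1 : ℕ) ≤ n := le_max_right _ _
      have h2 : max c₂ (1/c₁) ≤ (⌈max c₂ (1/c₁)⌉₊:ℝ) := Nat.le_ceil _
      have h3 : ((⌈max c₂ (1/c₁)⌉₊ + 1:ℕ):ℝ) ≤ (n:ℝ) := by exact_mod_cast h1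
      push_cast at h3
      linarith
    have hdata := (hRt (n-1)).2.2
    have hnn : n - 1 + 1 = n := by omega
    rw [hnn] at hdata
    obtain ⟨p, hp1, hp2⟩ := hdata
    have hcastn : ((n-1:ℕ):ℝ) + 3 = (n:ℝ) + 2 := by
      have h' : ((n-1:ℕ):ℝ) = (n:ℝ) - 1 := by push_cast [Nat.cast_sub hn1]; ring
      rw [h']; ring
    rw [hcastn] at hp1 hp2
    set e : ℝ := t n with he
    have hepos : 0 < e := (hPt n).2
    have hc₁e : c₁ * e < A n := (hAs' n).1
    have hc₂e : A n < c₂ * e := (hAs' n).2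
    have hblkA : Blk (A n) (B n) := ⟨hIE'.1 n, hN₂ n hnN₂⟩
    have hc₂n : c₂ < (n:ℝ)+2 := lt_of_le_of_lt (le_max_left _ _) hnc
    have hc₁n : 1/c₁ < (n:ℝ)+2 := lt_of_le_of_lt (le_max_right _ _) hnc
    -- A n > m (p+1)
    have hmA : m (p+1) < A n := by
      have h1 : m (p+1) < e / ((n:ℝ)+2) := by
        rw [lt_div_iff₀ (by positivity : (0:ℝ) < (n:ℝ)+2)]
        nlinarith
      have h2 : e / ((n:ℝ)+2) < c₁ * e := by
        rw [div_lt_iff₀ (by positivity : (0:ℝ) < (n:ℝ)+2)]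
        rw [div_lt_iff₀ hc₁] at hc₁n
        nlinarith
      linarith
    have hAl : A n < l p := by
      have h1 : c₂ * e < ((n:ℝ)+2) * e := mul_lt_mul_of_pos_right hc₂n hepos
      linarith
    have hcontr := hmax p (A n) (B n) hblkA hAl
    have hlm' : l (p+1) < m (p+1) := (hlm (p+1)).2
    linarith
  exact ⟨l, m, ⟨hIE_L, huniv⟩, hMfin⟩


end Aux

/-- Theorem 2.5. -/
theorem stmt16 (E : Set ℝ) (hE : E ⊆ Ici 0) (hsp : StronglyPorousAtZero E)
    (hacc : (0 : ℝ) ∈ closure (E \ {0})) :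
    CSP E ↔ ∃ l m : ℕ → ℝ, IsUniversal E l m ∧ Mlim l m < ⊤ := by
  constructor
  · intro hCSP
    exact forward_dir hE hacc hCSP
  · rintro ⟨l, m, ⟨hLIE, _⟩, hM⟩
    exact backward_dir hE hacc l m hLIE hM
end

section
/- Let E ⊆ [0,∞) and let τ̃ = (τ_n) ∈ Ẽ₀ᵈ. Then E is τ̃-strongly porous at 0 if and only if there is a constant k ∈ (1,∞) such that for every K ∈ (k,∞) there exists N₁(K) ∈ ℕ with (kτ_n, Kτ_n) ∩ E = ∅ for every n ≥ N₁(K). -/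
open Filter Topology Set
open scoped ENNReal

lemma finite_lower (τ a : ℕ → ℝ) (hτ : ∀ n, 0 < τ n) (ha : ∀ n, 0 < a n) (M : ℕ) :
    ∃ c : ℝ, 0 < c ∧ ∀ n < M, c * τ n < a n := by
  induction M with
  | zero => exact ⟨1, one_pos, fun n hn => absurd hn (Nat.not_lt_zero n)⟩
  | succ M ih =>
    obtain ⟨c, hc, h⟩ := ih
    refine ⟨min c (a M / (2 * τ M)), lt_min hc (by have := ha M; have := hτ M; positivity), fun n hn => ?_⟩
    rcases Nat.lt_succ_iff_lt_or_eq.1 hn with hn | rfl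
    · exact lt_of_le_of_lt (mul_le_mul_of_nonneg_right (min_le_left _ _) (hτ n).le) (h n hn)
    · calc min c (a n / (2 * τ n)) * τ n ≤ (a n / (2 * τ n)) * τ n :=
            mul_le_mul_of_nonneg_right (min_le_right _ _) (hτ n).le
        _ = a n / 2 := by field_simp [(hτ n).ne']
        _ < a n := by linarith [ha n]

lemma finite_upper (τ a : ℕ → ℝ) (hτ : ∀ n, 0 < τ n) (ha : ∀ n, 0 < a n) (M : ℕ) :
    ∃ c : ℝ, 0 < c ∧ ∀ n < M, a n < c * τ n := by
  induction M with
  | zero => exact ⟨1, one_pos, fun n hn => absurd hn (Nat.not_lt_zero n)⟩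
  | succ M ih =>
    obtain ⟨c, hc, h⟩ := ih
    refine ⟨max c (2 * a M / τ M), lt_max_of_lt_left hc, fun n hn => ?_⟩
    rcases Nat.lt_succ_iff_lt_or_eq.1 hn with hn | rfl
    · exact lt_of_lt_of_le (h n hn) (mul_le_mul_of_nonneg_right (le_max_left _ _) (hτ n).le)
    · calc a n < 2 * a n := by linarith [ha n]
        _ = (2 * a n / τ n) * τ n := by field_simp [(hτ n).ne']
        _ ≤ max c (2 * a n / τ n) * τ n :=
            mul_le_mul_of_nonneg_right (le_max_right _ _) (hτ n).le

lemma asymp_of_eventually {τ a : ℕ → ℝ} (hτ : ∀ n, 0 < τ n) (ha : ∀ n, 0 < a n)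
    {c₁ c₂ : ℝ} (hc₁ : 0 < c₁) (hc₂ : 0 < c₂)
    (h : ∀ᶠ n in atTop, c₁ * τ n < a n ∧ a n < c₂ * τ n) : Asymp τ a := by
  obtain ⟨M, hM⟩ := eventually_atTop.1 h
  obtain ⟨d₁, hd₁, h₁⟩ := finite_lower τ a hτ ha M
  obtain ⟨d₂, hd₂, h₂⟩ := finite_upper τ a hτ ha M
  refine ⟨min c₁ d₁, max c₂ d₂, lt_min hc₁ hd₁, lt_max_of_lt_left hc₂, fun n => ?_⟩
  rcases lt_or_ge n M with hn | hn
  · exact ⟨lt_of_le_of_lt (mul_le_mul_of_nonneg_right (min_le_right _ _) (hτ n).le) (h₁ n hn),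
      lt_of_lt_of_le (h₂ n hn) (mul_le_mul_of_nonneg_right (le_max_right _ _) (hτ n).le)⟩
  · exact ⟨lt_of_le_of_lt (mul_le_mul_of_nonneg_right (min_le_left _ _) (hτ n).le) (hM n hn).1,
      lt_of_lt_of_le (hM n hn).2 (mul_le_mul_of_nonneg_right (le_max_left _ _) (hτ n).le)⟩

/-- Lemma 2.7. -/
theorem stmt17 (E : Set ℝ) (hE : E ⊆ Ici 0) (τ : ℕ → ℝ) (hτ : MemE0d E τ) :
    TauStronglyPorous E τ ↔
      ∃ k : ℝ, 1 < k ∧ ∀ K : ℝ, k < K → ∃ N₁ : ℕ, ∀ n, N₁ ≤ n →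
        Ioo (k * τ n) (K * τ n) ∩ E = ∅ := by
  obtain ⟨hadec, hmem, hlim⟩ := hτ
  have hτpos : ∀ n, 0 < τ n := fun n => lt_of_le_of_ne (hE (hmem n).1) (Ne.symm (hmem n).2)
  constructor
  · rintro ⟨a, b, ⟨hgap, -, -, hratio⟩, c₁, c₂, hc₁, hc₂, hc⟩
    refine ⟨max c₂ 2, lt_of_lt_of_le one_lt_two (le_max_right _ _), fun K hK => ?_⟩
    have hab : ∀ n, a n < b n := fun n => (hgap n).2.1
    have hapos : ∀ n, 0 < a n := fun n => lt_trans (mul_pos hc₁ (hτpos n)) (hc n).1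
    have hbpos : ∀ n, 0 < b n := fun n => (hapos n).trans (hab n)
    have hKpos : (0:ℝ) < K := lt_trans (lt_of_lt_of_le two_pos (le_max_right c₂ 2)) hK
    have h0 : Tendsto (fun n => a n / b n) atTop (𝓝 0) := by
      have heq : (fun n => a n / b n) = (fun n => 1 - (b n - a n) / b n) := by
        funext n
        field_simp [(hbpos n).ne']; ring
      rw [heq]
      have := (tendsto_const_nhds (x := (1:ℝ)) (f := atTop)).sub hratio
      simpa using this
    have hev : ∀ᶠ n in atTop, a n / b n < c₁ / K :=
      h0.eventually_lt_const (by positivity)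
    obtain ⟨N, hN⟩ := eventually_atTop.1 hev
    refine ⟨N, fun n hn => ?_⟩
    rw [Set.eq_empty_iff_forall_notMem]
    rintro x ⟨⟨hx1, hx2⟩, hxE⟩
    have hKb : K * τ n ≤ b n := by
      have h1 : c₁ * τ n < a n := (hc n).1
      have h2 : a n * K < c₁ * b n := (div_lt_div_iff₀ (hbpos n) hKpos).1 (hN n hn)
      nlinarith [mul_lt_mul_of_pos_left h1 hKpos]
    have hax : a n < x := by
      have : a n < max c₂ 2 * τ n :=
        lt_of_lt_of_le (hc n).2 (mul_le_mul_of_nonneg_right (le_max_left _ _) (hτpos n).le)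
      linarith
    have hxb : x < b n := lt_of_lt_of_le hx2 hKb
    have : x ∈ Ioo (a n) (b n) ∩ E := ⟨⟨hax, hxb⟩, hxE⟩
    rw [(hgap n).2.2.1] at this
    exact this
  · rintro ⟨k, hk, hK⟩
    have hkpos : (0:ℝ) < k := lt_trans one_pos hk
    obtain ⟨N0, hN0⟩ := hK (k+1) (by linarith)
    obtain ⟨N1, hN1⟩ := eventually_atTop.1 hadec
    have hev2 : ∀ᶠ n in atTop, (k+1) * τ n < τ 0 := by
      have h : Tendsto (fun n => (k+1) * τ n) atTop (𝓝 0) := by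
        simpa using hlim.const_mul (k+1)
      exact h.eventually_lt_const (hτpos 0)
    obtain ⟨N2, hN2⟩ := eventually_atTop.1 hev2
    set N := max N0 N2 with hNdef
    set g : ℕ → ℕ := fun n => max n N with hg
    have hgN : ∀ n, N ≤ g n := fun n => le_max_right _ _
    have hgN0 : ∀ n, N0 ≤ g n := fun n => le_trans (le_max_left N0 N2) (hgN n)
    have hgN2 : ∀ n, N2 ≤ g n := fun n => le_trans (le_max_right N0 N2) (hgN n)
    have hgeq : ∀ n, N ≤ n → g n = n := fun n hn => max_eq_left hn
    set a : ℕ → ℝ := fun n => sSup (E ∩ Iic (k * τ (g n))) with ha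
    set b : ℕ → ℝ := fun n => sInf (E ∩ Ici ((k+1) * τ (g n))) with hb
    have hSmem : ∀ m, τ m ∈ E ∩ Iic (k * τ m) :=
      fun m => ⟨(hmem m).1, le_mul_of_one_le_left (hτpos m).le hk.le⟩
    have hSne : ∀ n, (E ∩ Iic (k * τ (g n))).Nonempty := fun n => ⟨τ (g n), hSmem (g n)⟩
    have hSbdd : ∀ n, BddAbove (E ∩ Iic (k * τ (g n))) :=
      fun n => ⟨k * τ (g n), fun x hx => hx.2⟩
    have hTne : ∀ n, (E ∩ Ici ((k+1) * τ (g n))).Nonempty := fun n =>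
      ⟨τ 0, (hmem 0).1, (hN2 (g n) (hgN2 n)).le⟩
    have hTbdd : ∀ n, BddBelow (E ∩ Ici ((k+1) * τ (g n))) :=
      fun n => ⟨0, fun x hx => hE hx.1⟩
    have hale : ∀ n, a n ≤ k * τ (g n) := fun n => csSup_le (hSne n) (fun x hx => hx.2)
    have hage : ∀ n, τ (g n) ≤ a n := fun n => le_csSup (hSbdd n) (hSmem (g n))
    have hbge : ∀ n, (k+1) * τ (g n) ≤ b n := fun n => le_csInf (hTne n) (fun x hx => hx.2)
    have hapos : ∀ n, 0 < a n := fun n => lt_of_lt_of_le (hτpos _) (hage n)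
    have hkk1 : ∀ m, k * τ m < (k+1) * τ m :=
      fun m => mul_lt_mul_of_pos_right (by linarith) (hτpos m)
    have haltb : ∀ n, a n < b n :=
      fun n => lt_of_le_of_lt (hale n) (lt_of_lt_of_le (hkk1 (g n)) (hbge n))
    have hbpos : ∀ n, 0 < b n := fun n => lt_trans (hapos n) (haltb n)
    have hgapE : ∀ n, Ioo (a n) (b n) ∩ E = ∅ := by
      intro n
      rw [Set.eq_empty_iff_forall_notMem]
      rintro x ⟨⟨hx1, hx2⟩, hxE⟩
      rcases le_or_gt x (k * τ (g n)) with h | h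
      · exact absurd (le_csSup (hSbdd n) ⟨hxE, h⟩) (not_le.2 hx1)
      rcases lt_or_ge x ((k+1) * τ (g n)) with h' | h'
      · have hmm : x ∈ Ioo (k * τ (g n)) ((k+1) * τ (g n)) ∩ E := ⟨⟨h, h'⟩, hxE⟩
        rw [hN0 (g n) (hgN0 n)] at hmm
        exact hmm
      · exact absurd (csInf_le (hTbdd n) ⟨hxE, h'⟩) (not_le.2 hx2)
    have hgap : ∀ n, IsGapComponent E (a n) (b n) := by
      intro n
      refine ⟨(hapos n).le, haltb n, hgapE n, fun a' b' ha'0 ha' hb' hempty => ?_⟩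
      constructor
      · by_contra hne
        have hlt : a' < a n := lt_of_le_of_ne ha' hne
        obtain ⟨x, hxS, hx⟩ := exists_lt_of_lt_csSup (hSne n) hlt
        have hmm : x ∈ Ioo a' b' ∩ E :=
          ⟨⟨hx, lt_of_le_of_lt (le_csSup (hSbdd n) hxS) (lt_of_lt_of_le (haltb n) hb')⟩, hxS.1⟩
        rw [hempty] at hmm; exact hmm
      · by_contra hne
        have hlt : b n < b' := lt_of_le_of_ne hb' (Ne.symm hne)
        obtain ⟨x, hxT, hx⟩ := exists_lt_of_csInf_lt (hTne n) hlt
        have hxa : a' < x :=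
          lt_of_le_of_lt (ha'.trans (hale n)) (lt_of_lt_of_le (hkk1 (g n)) hxT.2)
        have hmm : x ∈ Ioo a' b' ∩ E := ⟨⟨hxa, hx⟩, hxT.1⟩
        rw [hempty] at hmm; exact hmm
    have hadeca : AlmostDecreasing a := by
      refine eventually_atTop.2 ⟨max N N1, fun n hn => ?_⟩
      have h1 : g n = n := hgeq n (le_trans (le_max_left _ _) hn)
      have h2 : g (n+1) = n+1 := hgeq _ (le_trans (le_trans (le_max_left _ _) hn) (Nat.le_succ n))
      have hτd : τ (n+1) ≤ τ n := hN1 n (le_trans (le_max_right _ _) hn)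
      show sSup (E ∩ Iic (k * τ (g (n+1)))) ≤ sSup (E ∩ Iic (k * τ (g n)))
      rw [h1, h2]
      refine csSup_le_csSup ⟨k * τ n, fun x hx => hx.2⟩ ⟨τ (n+1), hSmem (n+1)⟩ ?_
      intro x hx
      exact ⟨hx.1, hx.2.trans (mul_le_mul_of_nonneg_left hτd hkpos.le)⟩
    have ha0 : Tendsto a atTop (𝓝 0) := by
      refine tendsto_of_tendsto_of_tendsto_of_le_of_le' tendsto_const_nhds
        (by simpa using hlim.const_mul k) (Eventually.of_forall (fun n => (hapos n).le)) ?_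
      refine eventually_atTop.2 ⟨N, fun n hn => ?_⟩
      have h1 : g n = n := hgeq n hn
      calc a n ≤ k * τ (g n) := hale n
        _ = k * τ n := by rw [h1]
    have habq : Tendsto (fun n => a n / b n) atTop (𝓝 0) := by
      rw [Metric.tendsto_atTop]
      intro ε hε
      set K := max (k+1) (2*k/ε) with hKdef
      have hKk : k < K := lt_of_lt_of_le (by linarith) (le_max_left _ _)
      have hKpos : (0:ℝ) < K := lt_trans hkpos hKk
      obtain ⟨N₁, hN₁⟩ := hK K hKk
      refine ⟨max N N₁, fun n hn => ?_⟩
      have hgn : g n = n := hgeq n (le_trans (le_max_left _ _) hn)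
      have hbK : K * τ n ≤ b n := by
        refine le_csInf (hTne n) ?_
        intro x hx
        by_contra hlt
        push_neg at hlt
        rw [hgn] at hx
        have hmm : x ∈ Ioo (k * τ n) (K * τ n) ∩ E :=
          ⟨⟨lt_of_lt_of_le (hkk1 n) hx.2, hlt⟩, hx.1⟩
        rw [hN₁ n (le_trans (le_max_right _ _) hn)] at hmm
        exact hmm
      have h1 : a n ≤ k * τ n := by have h := hale n; rwa [hgn] at h
      have h2 : a n / b n ≤ k / K := by
        calc a n / b n ≤ (k * τ n) / (K * τ n) :=
              div_le_div₀ (mul_nonneg hkpos.le (hτpos n).le) h1 (mul_pos hKpos (hτpos n)) hbK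
          _ = k / K := mul_div_mul_right k K (hτpos n).ne'
      have h3 : k / K < ε := by
        have hb2 : (0:ℝ) < 2*k/ε := by positivity
        calc k / K ≤ k / (2*k/ε) :=
              div_le_div_of_nonneg_left hkpos.le hb2 (le_max_right _ _)
          _ = ε / 2 := by field_simp
          _ < ε := by linarith
      rw [Real.dist_eq, sub_zero, abs_of_nonneg (div_nonneg (hapos n).le (hbpos n).le)]
      exact lt_of_le_of_lt h2 h3
    have hratio : Tendsto (fun n => (b n - a n) / b n) atTop (𝓝 1) := by
      have heq : (fun n => (b n - a n) / b n) = (fun n => 1 - a n / b n) := by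
        funext n
        field_simp [(hbpos n).ne']
      rw [heq]
      have h := (tendsto_const_nhds (x := (1:ℝ)) (f := atTop)).sub habq
      simpa using h
    refine ⟨a, b, ⟨hgap, hadeca, ha0, hratio⟩, ?_⟩
    refine asymp_of_eventually hτpos hapos (c₁ := 1/2) (c₂ := k+1) (by norm_num) (by linarith) ?_
    refine eventually_atTop.2 ⟨N, fun n hn => ?_⟩
    have hgn : g n = n := hgeq n hn
    constructor
    · calc (1/2) * τ n < τ n := by nlinarith [hτpos n]
        _ = τ (g n) := by rw [hgn]
        _ ≤ a n := hage n
    · calc a n ≤ k * τ (g n) := hale n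
        _ = k * τ n := by rw [hgn]
        _ < (k+1) * τ n := hkk1 n
end
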